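/- arXiv:1903.01326 — 12 statements merged into one kernel-verified Lean document; each statement's English description precedes it below -/
import Mathlib

section
/- Let R be an n×n real symmetric matrix with nonnegative entries, R ≠ 0, and let κ = η(R) be its nullity. Then E(R) ≥ sqrt( |R|² + (n−κ)(n−κ−1)·|Υ_{n−κ}(R)|^{2/(n−κ)} ). -/
open Finset

/-- The energy of a Hermitian (real symmetric) matrix: the sum of the absolute
values of its eigenvalues. -/
noncomputable def Matrix.energy {n : ℕ} (R : Matrix (Fin n) (Fin n) ℝ)
    (hR : R.IsHermitian) : ℝ :=
  ∑ i, |hR.eigenvalues i|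

/-- The nullity of a Hermitian (real symmetric) matrix: the multiplicity of `0`
as an eigenvalue. -/
noncomputable def Matrix.nullityEig {n : ℕ} (R : Matrix (Fin n) (Fin n) ℝ)
    (hR : R.IsHermitian) : ℕ :=
  (Finset.univ.filter fun i => hR.eigenvalues i = 0).card

/-- `Υ_{n-κ}(R)`: the product of the nonzero eigenvalues of `R`, i.e. the
`(n-κ)`-th elementary symmetric function of the eigenvalues when `κ` is the
nullity. -/
noncomputable def Matrix.prodNonzeroEig {n : ℕ} (R : Matrix (Fin n) (Fin n) ℝ)
    (hR : R.IsHermitian) : ℝ :=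
  ∏ i ∈ Finset.univ.filter (fun i => hR.eigenvalues i ≠ 0), hR.eigenvalues i


lemma amgm_offdiag {α : Type*} [DecidableEq α] (S : Finset α) (a : α → ℝ)
    (ha : ∀ i ∈ S, 0 < a i) (hm : 2 ≤ S.card) :
    (S.card : ℝ) * ((S.card : ℝ) - 1) * (∏ i ∈ S, a i) ^ ((2 : ℝ) / (S.card : ℝ)) ≤
      ∑ p ∈ S.offDiag, a p.1 * a p.2 := by
  set m := S.card with hmdef
  set N := S.offDiag.card with hNdef
  have hNcard : N = m * m - m := Finset.offDiag_card S
  have hmm : m ≤ m * m := Nat.le_mul_of_pos_left m (by omega)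
  have hNR : (N : ℝ) = (m : ℝ) * ((m : ℝ) - 1) := by
    rw [hNcard, Nat.cast_sub hmm]; push_cast; ring
  have hNpos : (0 : ℝ) < N := by
    rw [hNR]
    have : (2 : ℝ) ≤ (m : ℝ) := by exact_mod_cast hm
    nlinarith
  have hQpos : 0 < ∏ i ∈ S, a i := Finset.prod_pos ha
  set Q := ∏ i ∈ S, a i with hQdef
  have hswap : ∀ f : α → ℝ, (∏ p ∈ S.offDiag, f p.1) = ∏ i ∈ S, f i ^ (m - 1) := by
    intro f
    rw [show S.offDiag = (S ×ˢ S).filter (fun p => p.1 ≠ p.2) from by ext p; simp [and_assoc], Finset.prod_filter,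
      Finset.prod_product]
    refine Finset.prod_congr rfl fun i hi => ?_
    rw [← Finset.prod_filter, Finset.filter_ne]
    simp [Finset.card_erase_of_mem hi, ← hmdef]
  have hswap2 : ∀ f : α → ℝ, (∏ p ∈ S.offDiag, f p.2) = ∏ i ∈ S, f i ^ (m - 1) := by
    intro f
    rw [show S.offDiag = (S ×ˢ S).filter (fun p => p.1 ≠ p.2) from by ext p; simp [and_assoc], Finset.prod_filter,
      Finset.prod_product, Finset.prod_comm]
    refine Finset.prod_congr rfl fun j hj => ?_
    rw [← Finset.prod_filter, Finset.filter_ne']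
    simp [Finset.card_erase_of_mem hj, ← hmdef]
  have hprod : (∏ p ∈ S.offDiag, (a p.1 * a p.2)) = Q ^ (2 * (m - 1)) := by
    rw [Finset.prod_mul_distrib, hswap a, hswap2 a, Finset.prod_pow, ← pow_add, two_mul]
  -- AM-GM
  have key := Real.geom_mean_le_arith_mean_weighted S.offDiag (fun _ => (N : ℝ)⁻¹)
    (fun p => a p.1 * a p.2) (fun _ _ => by positivity)
    (by rw [Finset.sum_const, nsmul_eq_mul, ← hNdef, mul_inv_cancel₀ (ne_of_gt hNpos)])
    (fun p hp => by
      rcases Finset.mem_offDiag.mp hp with ⟨h1, h2, _⟩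
      exact le_of_lt (mul_pos (ha _ h1) (ha _ h2)))
  rw [Real.finset_prod_rpow S.offDiag _ (fun p hp => by
      rcases Finset.mem_offDiag.mp hp with ⟨h1, h2, _⟩
      exact le_of_lt (mul_pos (ha _ h1) (ha _ h2))) _] at key
  have hexp : (Q ^ (2 * (m - 1))) ^ ((N : ℝ)⁻¹) = Q ^ ((2 : ℝ) / (m : ℝ)) := by
    rw [← Real.rpow_natCast Q (2 * (m - 1)), ← Real.rpow_mul hQpos.le]
    congr 1
    have h1m : 1 ≤ m := by omega
    have hm0 : (m : ℝ) ≠ 0 := by positivity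
    have hm1 : (m : ℝ) - 1 ≠ 0 := by
      have : (2 : ℝ) ≤ (m : ℝ) := by exact_mod_cast hm
      linarith
    rw [hNR]
    push_cast [Nat.cast_sub h1m]
    field_simp
  rw [hprod, hexp, ← Finset.mul_sum] at key
  have hfin := mul_le_mul_of_nonneg_left key hNpos.le
  rw [mul_inv_cancel_left₀ (ne_of_gt hNpos)] at hfin
  calc (m : ℝ) * ((m : ℝ) - 1) * Q ^ ((2 : ℝ) / (m : ℝ))
      = (N : ℝ) * Q ^ ((2 : ℝ) / (m : ℝ)) := by rw [hNR]
    _ ≤ _ := hfin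


theorem energy_lower_bound_mcclelland {n : ℕ} (R : Matrix (Fin n) (Fin n) ℝ)
    (hR : R.IsHermitian) (hnonneg : ∀ i j, 0 ≤ R i j) (hR0 : R ≠ 0)
    (κ : ℕ) (hκ : κ = R.nullityEig hR) :
    R.energy hR ≥
      Real.sqrt ((∑ i, (hR.eigenvalues i) ^ 2) +
        ((n : ℝ) - κ) * ((n : ℝ) - κ - 1) *
          |R.prodNonzeroEig hR| ^ ((2 : ℝ) / ((n : ℝ) - κ))) := by
  classical
  set a : Fin n → ℝ := fun i => |hR.eigenvalues i| with ha
  set S : Finset (Fin n) := univ.filter (fun i => hR.eigenvalues i ≠ 0) with hS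
  set m := S.card with hm
  -- κ + m = n
  have hcardsum : κ + m = n := by
    rw [hκ, Matrix.nullityEig, hm, hS]
    simpa using Finset.card_filter_add_card_filter_not
      (s := (univ : Finset (Fin n))) (p := fun i => hR.eigenvalues i = 0)
  have hcast : (n : ℝ) - κ = (m : ℝ) := by
    have : (κ : ℝ) + m = n := by exact_mod_cast hcardsum
    linarith
  -- R ≠ 0 means some eigenvalue nonzero
  have hmpos : 0 < m := by
    rw [hm, Finset.card_pos]
    by_contra h
    push_neg at h
    apply hR0
    have hz : ∀ i, hR.eigenvalues i = 0 := by
      intro i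
      by_contra hi
      exact (Finset.not_nonempty_iff_eq_empty.mpr h) ⟨i, by simp [hS, hi]⟩
    have := hR.spectral_theorem
    rw [this]
    have : Matrix.diagonal (RCLike.ofReal ∘ hR.eigenvalues) = (0 : Matrix (Fin n) (Fin n) ℝ) := by
      ext i j
      simp [Matrix.diagonal, hz]
    rw [this, map_zero]
  have hPabs : |R.prodNonzeroEig hR| = ∏ i ∈ S, a i := by
    rw [Matrix.prodNonzeroEig, Finset.abs_prod]
  have hE0 : 0 ≤ R.energy hR := Finset.sum_nonneg fun i _ => abs_nonneg _
  rw [ge_iff_le, show R.energy hR = Real.sqrt ((R.energy hR) ^ 2) from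
    (Real.sqrt_sq hE0).symm]
  apply Real.sqrt_le_sqrt
  -- expand E^2
  have hEsq : (R.energy hR) ^ 2 =
      (∑ i, (hR.eigenvalues i) ^ 2) + ∑ p ∈ (univ : Finset (Fin n)).offDiag, a p.1 * a p.2 := by
    rw [Matrix.energy, sq, Finset.sum_mul_sum]
    rw [← Finset.sum_product' (s := (univ : Finset (Fin n))) (t := univ)
      (f := fun i j => a i * a j)]
    rw [← Finset.diag_union_offDiag (univ : Finset (Fin n)),
      Finset.sum_union (Finset.disjoint_diag_offDiag _), Finset.sum_diag]
    congr 1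
    exact Finset.sum_congr rfl fun i _ => by rw [← sq_abs]; ring
  rw [hEsq]
  gcongr
  have hsub : S.offDiag ⊆ (univ : Finset (Fin n)).offDiag :=
    Finset.offDiag_mono (Finset.subset_univ S)
  have hstep : ∑ p ∈ S.offDiag, a p.1 * a p.2 ≤
      ∑ p ∈ (univ : Finset (Fin n)).offDiag, a p.1 * a p.2 :=
    Finset.sum_le_sum_of_subset_of_nonneg hsub
      (fun p _ _ => mul_nonneg (abs_nonneg _) (abs_nonneg _))
  refine le_trans ?_ hstep
  rw [hcast, hPabs]
  rcases eq_or_lt_of_le (show 1 ≤ m from hmpos) with h1 | h2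
  · -- m = 1
    rw [← h1]
    norm_num
    exact Finset.sum_nonneg fun p hp =>
      mul_nonneg (abs_nonneg _) (abs_nonneg _)
  · exact amgm_offdiag S a
      (fun i hi => abs_pos.mpr (by simpa [hS] using hi)) h2
end

section
/- Let G be a finite simple graph with n vertices and m edges, without isolated vertices, and let κ = η(G) be its nullity. Then E(G) ≥ sqrt( 2m + (n−κ)(n−κ−1)·|Υ_{n−κ}(G)|^{2/(n−κ)} ). -/
open Finset

/-- The adjacency matrix of a simple graph, as a real matrix, is Hermitian. -/
lemma SimpleGraph.adjMatrix_isHermitian {V : Type*} [Fintype V]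
    (G : SimpleGraph V) [DecidableRel G.Adj] : (G.adjMatrix ℝ).IsHermitian := by
  unfold Matrix.IsHermitian
  ext i j
  simp [Matrix.conjTranspose_apply, SimpleGraph.adj_comm]

/-- The energy of a graph: the sum of the absolute values of the eigenvalues of
its adjacency matrix. -/
noncomputable def SimpleGraph.energy {n : ℕ} (G : SimpleGraph (Fin n))
    [DecidableRel G.Adj] : ℝ :=
  ∑ i, |(G.adjMatrix_isHermitian).eigenvalues i|

/-- The nullity of a graph: the multiplicity of `0` as an eigenvalue of its
adjacency matrix. -/
noncomputable def SimpleGraph.nullity {n : ℕ} (G : SimpleGraph (Fin n))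
    [DecidableRel G.Adj] : ℕ :=
  (Finset.univ.filter fun i => (G.adjMatrix_isHermitian).eigenvalues i = 0).card

/-- `Υ_{n-κ}(G)`: the product of the nonzero eigenvalues of `G`, i.e. the
`(n-κ)`-th elementary symmetric function of the eigenvalues when `κ` is the
nullity of `G`. -/
noncomputable def SimpleGraph.prodNonzeroEig {n : ℕ} (G : SimpleGraph (Fin n))
    [DecidableRel G.Adj] : ℝ :=
  ∏ i ∈ Finset.univ.filter
      (fun i => (G.adjMatrix_isHermitian).eigenvalues i ≠ 0),
    (G.adjMatrix_isHermitian).eigenvalues i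
theorem graph_energy_lower_bound_mcclelland {n : ℕ} (G : SimpleGraph (Fin n))
    [DecidableRel G.Adj] (m : ℕ) (hm : m = G.edgeFinset.card)
    (hiso : ∀ v, 0 < G.degree v)
    (κ : ℕ) (hκ : κ = G.nullity) :
    G.energy ≥
      Real.sqrt (2 * m +
        ((n : ℝ) - κ) * ((n : ℝ) - κ - 1) *
          |G.prodNonzeroEig| ^ ((2 : ℝ) / ((n : ℝ) - κ))) := by
  classical
  have hA := G.adjMatrix_isHermitian
  set lam : Fin n → ℝ := hA.eigenvalues with hlam
  set S : Finset (Fin n) := Finset.univ.filter (fun i => lam i ≠ 0) with hSdef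
  set N : ℕ := S.card with hN
  set P : ℝ := ∏ i ∈ S, |lam i| with hP
  -- basic facts
  have habs : |G.prodNonzeroEig| = P := by
    rw [SimpleGraph.prodNonzeroEig, hP, Finset.abs_prod]
  have hcardκ : κ + N = n := by
    rw [hκ, SimpleGraph.nullity, hN, hSdef]
    have := Finset.card_filter_add_card_filter_not
      (s := (Finset.univ : Finset (Fin n))) (p := fun i => lam i = 0)
    simpa using this
  have hcard : (n : ℝ) - κ = N := by
    have : (κ : ℝ) + N = n := by exact_mod_cast congrArg (Nat.cast (R := ℝ)) hcardκ
    linarith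
  -- sum of squares of eigenvalues is 2m
  have hsumsq : ∑ i, lam i ^ 2 = 2 * (m : ℝ) := by
    have t1 : ∑ i, lam i ^ 2 = (G.adjMatrix ℝ * G.adjMatrix ℝ).trace := by
      set A := G.adjMatrix ℝ
      set U : Matrix (Fin n) (Fin n) ℝ := (hA.eigenvectorUnitary : Matrix (Fin n) (Fin n) ℝ)
      set D : Matrix (Fin n) (Fin n) ℝ := Matrix.diagonal (RCLike.ofReal ∘ hA.eigenvalues)
        with hDdef
      have hU : star U * U = 1 := Matrix.UnitaryGroup.star_mul_self _
      have key : A * A = U * ((D * D) * star U) := by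
        conv_lhs => rw [hA.spectral_theorem, Unitary.conjStarAlgAut_apply]
        simp only [mul_assoc]
        rw [← mul_assoc (star U) U, hU, one_mul]
      rw [key, Matrix.trace_mul_comm, mul_assoc, hU, mul_one]
      simp [hDdef, Matrix.diagonal_mul_diagonal, Matrix.trace_diagonal, sq, hlam]
    have t2 : (G.adjMatrix ℝ * G.adjMatrix ℝ).trace = 2 * (m : ℝ) := by
      rw [Matrix.trace]
      simp only [Matrix.diag_apply, SimpleGraph.adjMatrix_mul_self_apply_self]
      rw [hm, ← Nat.cast_sum, G.sum_degrees_eq_twice_card_edges]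
      push_cast
      ring
    rw [t1, t2]
  have hsumsqS : ∑ i ∈ S, |lam i| * |lam i| = 2 * (m : ℝ) := by
    have : ∑ i ∈ S, |lam i| * |lam i| = ∑ i ∈ S, lam i ^ 2 := by
      apply Finset.sum_congr rfl; intro i _; rw [← abs_mul, abs_mul_self, sq]
    rw [this, ← hsumsq]
    apply Finset.sum_subset (Finset.subset_univ S)
    intro i _ hi
    have : lam i = 0 := by
      by_contra h
      exact hi (by simp [hSdef, h])
    simp [this]
  -- energy as sum over S
  have hE : G.energy = ∑ i ∈ S, |lam i| := by
    rw [SimpleGraph.energy]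
    symm
    apply Finset.sum_subset (Finset.subset_univ S)
    intro i _ hi
    have : lam i = 0 := by
      by_contra h
      exact hi (by simp [hSdef, h])
    rw [hlam] at this
    simp [hlam, this]
  have hEnn : 0 ≤ G.energy := by
    rw [hE]; exact Finset.sum_nonneg fun i _ => abs_nonneg _
  -- square of energy
  have hEsq : G.energy ^ 2 = 2 * (m : ℝ) +
      ∑ p ∈ S.offDiag, |lam p.1| * |lam p.2| := by
    rw [hE, sq, Finset.sum_mul_sum]
    rw [← Finset.sum_product' (s := S) (t := S) (f := fun i j => |lam i| * |lam j|)]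
    rw [← Finset.diag_union_offDiag S,
      Finset.sum_union (Finset.disjoint_diag_offDiag S), Finset.sum_diag, hsumsqS]
  -- lower bound for the off-diagonal part
  have hkey : ((N : ℝ) * ((N : ℝ) - 1)) * P ^ ((2 : ℝ) / (N : ℝ)) ≤
      ∑ p ∈ S.offDiag, |lam p.1| * |lam p.2| := by
    by_cases h2 : 2 ≤ N
    · have hPpos : 0 < P := by
        rw [hP]
        apply Finset.prod_pos
        intro i hi
        have : lam i ≠ 0 := by simpa [hSdef] using hi
        exact abs_pos.2 this
      have hcardoff : (S.offDiag.card : ℝ) = (N : ℝ) * ((N : ℝ) - 1) := by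
        have hc : S.offDiag.card = N * (N - 1) := by
          rw [Finset.offDiag_card, ← hN]
          have haux : ∀ M : ℕ, M * M - M = M * (M - 1) := by
            intro M
            cases M with
            | zero => simp
            | succ k => rw [Nat.succ_sub_one, Nat.mul_succ, Nat.add_sub_cancel]
          exact haux N
        rw [hc]
        push_cast [Nat.cast_sub (by omega : 1 ≤ N)]
        ring
      have hNNpos : (0 : ℝ) < (N : ℝ) * ((N : ℝ) - 1) := by
        have : (2 : ℝ) ≤ N := by exact_mod_cast h2
        nlinarith
      set w : ℝ := ((N : ℝ) * ((N : ℝ) - 1))⁻¹ with hw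
      have hwpos : 0 < w := inv_pos.2 hNNpos
      have amgm := Real.geom_mean_le_arith_mean_weighted S.offDiag (fun _ => w)
        (fun p => |lam p.1| * |lam p.2|)
        (fun _ _ => hwpos.le)
        (by rw [Finset.sum_const, nsmul_eq_mul, hcardoff, hw]
            field_simp
            exact div_self (sub_pos.mpr (by exact_mod_cast (by omega : 1 < N) : (1 : ℝ) < N)).ne')
        (fun p _ => mul_nonneg (abs_nonneg _) (abs_nonneg _))
      have amgm' : ∏ p ∈ S.offDiag, (|lam p.1| * |lam p.2|) ^ w ≤
          ∑ p ∈ S.offDiag, w * (|lam p.1| * |lam p.2|) := amgm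
      -- compute product over offDiag
      have hprodfull : ∏ p ∈ S ×ˢ S, |lam p.1| * |lam p.2| = P ^ (2 * N) := by
        rw [Finset.prod_product]
        calc ∏ i ∈ S, ∏ j ∈ S, |lam i| * |lam j|
            = ∏ i ∈ S, (|lam i| ^ N * P) := Finset.prod_congr rfl (fun i _ => by
              rw [Finset.prod_mul_distrib, Finset.prod_const, ← hN, hP])
          _ = (∏ i ∈ S, |lam i| ^ N) * ∏ _i ∈ S, P := Finset.prod_mul_distrib
          _ = P ^ N * P ^ N := by rw [Finset.prod_pow, ← hP, Finset.prod_const, ← hN]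
          _ = P ^ (2 * N) := by rw [← pow_add]; congr 1; omega
      have hproddiag : ∏ p ∈ S.diag, |lam p.1| * |lam p.2| = P ^ 2 := by
        rw [Finset.prod_diag]
        have h2' : ∀ i ∈ S, |lam i| * |lam i| = |lam i| ^ 2 := fun i _ => (sq _).symm
        rw [Finset.prod_congr rfl h2', Finset.prod_pow, ← hP]
      have hprodoff : ∏ p ∈ S.offDiag, |lam p.1| * |lam p.2| = P ^ (2 * N - 2) := by
        have hsplit : P ^ 2 * ∏ p ∈ S.offDiag, |lam p.1| * |lam p.2| = P ^ (2 * N) := by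
          rw [← hproddiag, ← Finset.prod_union (Finset.disjoint_diag_offDiag S),
            Finset.diag_union_offDiag, hprodfull]
        have hp2 : (P : ℝ) ^ 2 ≠ 0 := pow_ne_zero _ hPpos.ne'
        have hexp : P ^ (2 * N) = P ^ 2 * P ^ (2 * N - 2) := by
          rw [← pow_add]; congr 1; omega
        rw [hexp] at hsplit
        exact mul_left_cancel₀ hp2 hsplit
      -- compute geometric mean
      have hgm : ∏ p ∈ S.offDiag, (|lam p.1| * |lam p.2|) ^ w = P ^ ((2 : ℝ) / (N : ℝ)) := by
        rw [Real.finset_prod_rpow _ _ (fun p _ => mul_nonneg (abs_nonneg _) (abs_nonneg _)) w,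
          hprodoff, ← Real.rpow_natCast P (2 * N - 2), ← Real.rpow_mul hPpos.le]
        congr 1
        have hc : ((2 * N - 2 : ℕ) : ℝ) = 2 * (N : ℝ) - 2 := by
          push_cast [Nat.cast_sub (by omega : 2 ≤ 2 * N)]
          ring
        rw [hc, hw]
        have hN0 : (N : ℝ) ≠ 0 := by positivity
        have hN1 : (N : ℝ) - 1 ≠ 0 := by
          have : (2 : ℝ) ≤ N := by exact_mod_cast h2
          linarith
        field_simp
      rw [hgm] at amgm'
      have hsum : ∑ p ∈ S.offDiag, w * (|lam p.1| * |lam p.2|) =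
          w * ∑ p ∈ S.offDiag, |lam p.1| * |lam p.2| := by
        rw [Finset.mul_sum]
      rw [hsum] at amgm'
      calc ((N : ℝ) * ((N : ℝ) - 1)) * P ^ ((2 : ℝ) / (N : ℝ))
          ≤ ((N : ℝ) * ((N : ℝ) - 1)) * (w * ∑ p ∈ S.offDiag, |lam p.1| * |lam p.2|) := by
            exact mul_le_mul_of_nonneg_left amgm' hNNpos.le
        _ = ∑ p ∈ S.offDiag, |lam p.1| * |lam p.2| := by
            rw [hw]; field_simp
            exact mul_div_cancel_left₀ _ (sub_pos.mpr (by exact_mod_cast (by omega : 1 < N) : (1 : ℝ) < N)).ne'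
    · -- N ≤ 1 : LHS is zero (N * (N-1) = 0), RHS nonneg
      have hN01 : N = 0 ∨ N = 1 := by omega
      have hz : ((N : ℝ) * ((N : ℝ) - 1)) = 0 := by
        rcases hN01 with h | h <;> simp [h]
      rw [hz, zero_mul]
      exact Finset.sum_nonneg fun p _ => mul_nonneg (abs_nonneg _) (abs_nonneg _)
  -- put everything together
  rw [ge_iff_le, habs, hcard]
  have hinner : 2 * (m : ℝ) + (N : ℝ) * ((N : ℝ) - 1) * P ^ ((2 : ℝ) / (N : ℝ))
      ≤ G.energy ^ 2 := by
    rw [hEsq]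
    linarith [hkey]
  calc Real.sqrt (2 * (m : ℝ) + (N : ℝ) * ((N : ℝ) - 1) * P ^ ((2 : ℝ) / (N : ℝ)))
      ≤ Real.sqrt (G.energy ^ 2) := Real.sqrt_le_sqrt hinner
    _ = G.energy := by rw [Real.sqrt_sq hEnn]
end

section
/- Let G be a finite simple graph with n vertices and m edges, without isolated vertices, and let κ = η(G) be its nullity. Then E(G) = sqrt( 2m + (n−κ)(n−κ−1)·|Υ_{n−κ}(G)|^{2/(n−κ)} ) holds if and only if all nonzero eigenvalues of G have the same absolute value. -/
open Finset

theorem amgm_eq_iff {ι : Type*} (s : Finset ι) (f : ι → ℝ) (hf : ∀ i ∈ s, 0 < f i)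
    (hs : s.Nonempty) :
    (∑ i ∈ s, f i = s.card * (∏ i ∈ s, f i) ^ ((1:ℝ)/s.card)) ↔
      ∀ i ∈ s, ∀ j ∈ s, f i = f j := by
  have hN : (0:ℝ) < s.card := by exact_mod_cast Finset.card_pos.2 hs
  set N : ℝ := (s.card : ℝ) with hNdef
  have hprod : 0 < ∏ i ∈ s, f i := Finset.prod_pos hf
  have key := strictConvexOn_exp.map_sum_eq_iff (w := fun _ : ι => 1/N)
    (p := fun i => Real.log (f i)) (t := s)
    (fun i _ => by positivity) (by simp; field_simp; exact hNdef.symm) (fun i _ => Set.mem_univ _)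
  simp only [smul_eq_mul] at key
  have e1 : ∑ i ∈ s, (1/N) * Real.log (f i) = Real.log (∏ i ∈ s, f i) * (1/N) := by
    rw [← Finset.mul_sum, ← Real.log_prod (fun i hi => (hf i hi).ne')]
    ring
  have e2 : Real.exp (∑ i ∈ s, (1/N) * Real.log (f i)) = (∏ i ∈ s, f i) ^ ((1:ℝ)/N) := by
    rw [e1, Real.rpow_def_of_pos hprod]
  have e3 : ∑ i ∈ s, (1/N) * Real.exp (Real.log (f i)) = (∑ i ∈ s, f i) / N := by
    rw [Finset.sum_congr rfl fun i hi => by rw [Real.exp_log (hf i hi)], ← Finset.mul_sum]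
    ring
  rw [e2, e3, e1] at key
  constructor
  · intro h i hi j hj
    have heq : (∏ i ∈ s, f i) ^ ((1:ℝ)/N) = (∑ i ∈ s, f i) / N := by
      rw [h]; field_simp
    have hall := key.1 heq
    have hij : Real.log (f i) = Real.log (f j) := by rw [hall i hi, hall j hj]
    calc f i = Real.exp (Real.log (f i)) := (Real.exp_log (hf i hi)).symm
      _ = Real.exp (Real.log (f j)) := by rw [hij]
      _ = f j := Real.exp_log (hf j hj)
  · intro h
    obtain ⟨i₀, hi₀⟩ := hs
    have hlog : ∀ j ∈ s, Real.log (f j) = Real.log (f i₀) := fun j hj => by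
      rw [h j hj i₀ hi₀]
    have hc : Real.log (∏ i ∈ s, f i) * (1/N) = Real.log (f i₀) := by
      rw [Real.log_prod (fun i hi => (hf i hi).ne')]
      rw [Finset.sum_congr rfl hlog, Finset.sum_const, nsmul_eq_mul]
      field_simp
      rw [hNdef]; ring
    have heq : (∏ i ∈ s, f i) ^ ((1:ℝ)/N) = (∑ i ∈ s, f i) / N :=
      key.2 fun j hj => by rw [hlog j hj, hc]
    rw [heq]; field_simp

open Matrix in
theorem trace_sq_eq {n : ℕ} {A : Matrix (Fin n) (Fin n) ℝ} (hA : A.IsHermitian) :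
    Matrix.trace (A * A) = ∑ i, hA.eigenvalues i ^ 2 := by
  have h := hA.spectral_theorem
  set U : Matrix (Fin n) (Fin n) ℝ := (hA.eigenvectorUnitary : Matrix (Fin n) (Fin n) ℝ) with hU
  have hUU : star U * U = 1 := hA.eigenvectorUnitary.2.1
  have hUUc : ∀ B, star U * (U * B) = B := fun B => by
    rw [← Matrix.mul_assoc, hUU, Matrix.one_mul]
  set D : Matrix (Fin n) (Fin n) ℝ := diagonal (RCLike.ofReal ∘ hA.eigenvalues) with hD
  have h2 : A * A = U * (D * D) * star U := by
    rw [h, Unitary.conjStarAlgAut_apply]; show U * D * star U * (U * D * star U) = _; simp only [Matrix.mul_assoc, hUUc]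
  rw [h2, Matrix.trace_mul_cycle, ← Matrix.mul_assoc, hUU, Matrix.one_mul]
  rw [hD, Matrix.diagonal_mul_diagonal, Matrix.trace_diagonal]
  simp [sq]

open Matrix in
theorem trace_eq_sum_eig {n : ℕ} {A : Matrix (Fin n) (Fin n) ℝ} (hA : A.IsHermitian) :
    Matrix.trace A = ∑ i, hA.eigenvalues i := by
  have h := hA.spectral_theorem
  conv_lhs => rw [h, Unitary.conjStarAlgAut_apply]
  rw [Matrix.trace_mul_cycle, hA.eigenvectorUnitary.2.1, Matrix.one_mul, Matrix.trace_diagonal]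
  simp

theorem key_iff {ι : Type*} [Fintype ι] [DecidableEq ι] (lam : ι → ℝ) (m : ℕ) (hm : 0 < m)
    (h0 : ∑ i, lam i = 0) (h2 : ∑ i, lam i ^ 2 = 2 * m)
    (S : Finset ι) (hSdef : S = univ.filter (fun i => lam i ≠ 0)) :
    ((∑ i, |lam i|) = Real.sqrt (2*m + (S.card : ℝ)*((S.card : ℝ)-1) *
        |∏ i ∈ S, lam i| ^ ((2:ℝ)/(S.card : ℝ)))) ↔
      (∀ i j, lam i ≠ 0 → lam j ≠ 0 → |lam i| = |lam j|) := by
  have hS1 : ∀ i ∈ S, lam i ≠ 0 := fun i hi => by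
    rw [hSdef] at hi; exact (Finset.mem_filter.1 hi).2
  have hSmem : ∀ i, lam i ≠ 0 → i ∈ S := fun i hi => by
    rw [hSdef]; exact Finset.mem_filter.2 ⟨Finset.mem_univ i, hi⟩
  have hS2 : ∀ i, i ∉ S → lam i = 0 := fun i hi => by
    by_contra hne; exact hi (hSmem i hne)
  set p : ℕ := S.card with hpdef
  set a : ι → ℝ := fun i => |lam i| with ha
  have hapos : ∀ i ∈ S, 0 < a i := fun i hi => abs_pos.2 (hS1 i hi)
  set Q : ℝ := ∏ i ∈ S, a i with hQdef
  have hQpos : 0 < Q := Finset.prod_pos hapos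
  have habsP : |∏ i ∈ S, lam i| = Q := by rw [Finset.abs_prod]
  have hE : ∑ i, a i = ∑ i ∈ S, a i :=
    (Finset.sum_subset (Finset.subset_univ S) (fun i _ hi => by
      simp [ha, hS2 i hi])).symm
  have hEnn : 0 ≤ ∑ i ∈ S, a i := Finset.sum_nonneg fun i hi => (hapos i hi).le
  have hsqS : ∑ i ∈ S, a i ^ 2 = 2 * m := by
    rw [← h2]
    rw [← Finset.sum_subset (Finset.subset_univ S)
      (fun i _ hi => by rw [hS2 i hi, zero_pow two_ne_zero])]
    exact Finset.sum_congr rfl fun i _ => sq_abs _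
  -- p ≥ 2
  have hp0 : p ≠ 0 := by
    intro hzero
    have hSempty : S = ∅ := Finset.card_eq_zero.1 hzero
    have : (2:ℝ) * m = 0 := by
      rw [← h2]
      apply Finset.sum_eq_zero
      intro i _
      rw [hS2 i (by simp [hSempty]), zero_pow two_ne_zero]
    have : (m:ℝ) = 0 := by linarith
    exact_mod_cast absurd this (by exact_mod_cast hm.ne')
  have hp1 : p ≠ 1 := by
    intro hone
    obtain ⟨i₀, hi₀⟩ := Finset.card_eq_one.1 hone
    have hs : ∑ i, lam i = lam i₀ := by
      rw [show (univ : Finset ι) = univ from rfl]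
      rw [← Finset.sum_subset (Finset.subset_univ S)
        (fun i _ hi => hS2 i hi), hi₀, Finset.sum_singleton]
    have : lam i₀ = 0 := by rw [← hs, h0]
    exact hS1 i₀ (by rw [hi₀]; exact Finset.mem_singleton_self i₀) this
  have hp2 : 2 ≤ p := by omega
  have hpR : (0:ℝ) < p := by exact_mod_cast Nat.pos_of_ne_zero hp0
  have hpR1 : (0:ℝ) < (p:ℝ) - 1 := by
    have : (1:ℝ) < p := by exact_mod_cast lt_of_lt_of_le one_lt_two hp2
    linarith
  have hexp : (∑ i ∈ S, a i)^2 = 2*m + ∑ x ∈ S.offDiag, a x.1 * a x.2 := by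
    rw [sq, Finset.sum_mul_sum, ← Finset.sum_product' (f := fun i j => a i * a j),
      ← Finset.diag_union_offDiag S, Finset.sum_union (Finset.disjoint_diag_offDiag S),
      Finset.sum_diag]
    congr 1
    rw [← hsqS]
    exact Finset.sum_congr rfl fun i _ => (sq (a i)).symm
  have hprodSq : ∏ x ∈ S ×ˢ S, (a x.1 * a x.2) = Q ^ (2*p) := by
    rw [Finset.prod_product' (f := fun i j => a i * a j)]
    have h' : ∀ i ∈ S, ∏ j ∈ S, (a i * a j) = a i ^ p * Q := fun i _ => by
      rw [Finset.prod_mul_distrib, Finset.prod_const]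
    rw [Finset.prod_congr rfl h', Finset.prod_mul_distrib, Finset.prod_const,
      Finset.prod_pow, two_mul, pow_add]
  have hproddiag : ∏ x ∈ S.diag, (a x.1 * a x.2) = Q ^ 2 := by
    rw [Finset.prod_diag]
    show ∏ i ∈ S, a i * a i = Q ^ 2
    rw [Finset.prod_mul_distrib, ← sq]
  have hprodoff : ∏ x ∈ S.offDiag, (a x.1 * a x.2) = Q ^ (2*p - 2) := by
    have hu : Q ^ (2*p) = Q ^ 2 * ∏ x ∈ S.offDiag, (a x.1 * a x.2) := by
      rw [← hproddiag, ← Finset.prod_union (Finset.disjoint_diag_offDiag S),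
        Finset.diag_union_offDiag, hprodSq]
    have h2le : 2 ≤ 2*p := by omega
    rw [pow_sub₀ Q hQpos.ne' h2le, eq_mul_inv_iff_mul_eq₀ (by positivity), mul_comm]
    exact hu.symm
  have hMc : S.offDiag.card = p*p - p := Finset.offDiag_card S
  have hMpos : 0 < S.offDiag.card := by
    rw [hMc]
    have h2p : p * 2 ≤ p * p := Nat.mul_le_mul_left p hp2
    omega
  have hMR : (S.offDiag.card : ℝ) = (p:ℝ) * ((p:ℝ) - 1) := by
    rw [hMc]
    have hle : p ≤ p * p := Nat.le_mul_of_pos_left p (Nat.pos_of_ne_zero hp0)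
    push_cast [Nat.cast_sub hle]
    ring
  have hGM : (∏ x ∈ S.offDiag, (a x.1 * a x.2)) ^ ((1:ℝ)/(S.offDiag.card : ℝ))
      = Q ^ ((2:ℝ)/(p:ℝ)) := by
    rw [hprodoff, ← Real.rpow_natCast Q (2*p-2), ← Real.rpow_mul hQpos.le]
    congr 1
    have h22 : ((2*p - 2 : ℕ) : ℝ) = 2*(p:ℝ) - 2 := by
      have hle : 2 ≤ 2*p := by omega
      push_cast [Nat.cast_sub hle]
      ring
    rw [h22, hMR]
    field_simp
  have hXnn : 0 ≤ 2*(m:ℝ) + (p:ℝ)*((p:ℝ)-1) * Q ^ ((2:ℝ)/(p:ℝ)) := by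
    have h1 : (0:ℝ) ≤ Q ^ ((2:ℝ)/(p:ℝ)) := Real.rpow_nonneg hQpos.le _
    have hmnn : (0:ℝ) ≤ (m:ℝ) := Nat.cast_nonneg m
    nlinarith
  rw [habsP, hE]
  have hiff1 : (∑ i ∈ S, a i = Real.sqrt (2*(m:ℝ) + (p:ℝ)*((p:ℝ)-1) * Q ^ ((2:ℝ)/(p:ℝ))))
      ↔ (∑ i ∈ S, a i)^2 = 2*(m:ℝ) + (p:ℝ)*((p:ℝ)-1) * Q ^ ((2:ℝ)/(p:ℝ)) := by
    constructor
    · intro h; rw [h]; exact Real.sq_sqrt hXnn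
    · intro h; rw [← h]; exact (Real.sqrt_sq hEnn).symm
  rw [hiff1, hexp]
  have hiff2 : (2*(m:ℝ) + ∑ x ∈ S.offDiag, a x.1 * a x.2
        = 2*(m:ℝ) + (p:ℝ)*((p:ℝ)-1) * Q ^ ((2:ℝ)/(p:ℝ)))
      ↔ (∑ x ∈ S.offDiag, a x.1 * a x.2
        = (S.offDiag.card : ℝ) * (∏ x ∈ S.offDiag, (a x.1 * a x.2)) ^ ((1:ℝ)/(S.offDiag.card : ℝ))) := by
    rw [hGM, hMR]
    constructor <;> intro h <;> linarith
  rw [hiff2, amgm_eq_iff S.offDiag _ (fun x hx => by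
      obtain ⟨hx1, hx2, _⟩ := Finset.mem_offDiag.1 hx
      exact mul_pos (hapos _ hx1) (hapos _ hx2))
    (Finset.card_pos.1 hMpos)]
  constructor
  · intro hall i j hi hj
    have hiS : i ∈ S := hSmem i hi
    have hjS : j ∈ S := hSmem j hj
    rcases eq_or_ne i j with rfl | hij
    · rfl
    rcases eq_or_lt_of_le hp2 with hp2' | hp3
    · have hij2 : ({i, j} : Finset ι).card = 2 := by
        rw [Finset.card_insert_of_notMem (by simpa using hij), Finset.card_singleton]
      have hsub : ({i, j} : Finset ι) ⊆ S := by
        intro x hx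
        rcases Finset.mem_insert.1 hx with rfl | hx
        · exact hiS
        · rw [Finset.mem_singleton.1 hx]; exact hjS
      have hSij : S = {i, j} := (Finset.eq_of_subset_of_card_le hsub (by omega)).symm
      have hsum : lam i + lam j = 0 := by
        rw [← h0, ← Finset.sum_subset (Finset.subset_univ S) (fun x _ hx => hS2 x hx),
          hSij, Finset.sum_pair hij]
      have hlij : lam i = -lam j := by linarith
      show |lam i| = |lam j|
      rw [hlij, abs_neg]
    · have hcard : 0 < (S \ {i, j}).card := by
        have h1 : S.card - ({i,j} : Finset ι).card ≤ (S \ {i,j}).card := Finset.le_card_sdiff _ _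
        have hij2 : ({i, j} : Finset ι).card = 2 := by
          rw [Finset.card_insert_of_notMem (by simpa using hij), Finset.card_singleton]
        omega
      obtain ⟨k, hk⟩ := Finset.card_pos.1 hcard
      obtain ⟨hkS, hknotin⟩ := Finset.mem_sdiff.1 hk
      have hki : k ≠ i := fun h => hknotin (by rw [h]; exact Finset.mem_insert_self i {j})
      have hkj : k ≠ j := fun h => hknotin (by
        rw [h]; exact Finset.mem_insert_of_mem (Finset.mem_singleton_self j))
      have hik : (i, k) ∈ S.offDiag := Finset.mem_offDiag.2 ⟨hiS, hkS, fun h => hki h.symm⟩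
      have hjk : (j, k) ∈ S.offDiag := Finset.mem_offDiag.2 ⟨hjS, hkS, fun h => hkj h.symm⟩
      have heq := hall _ hik _ hjk
      exact mul_right_cancel₀ (hapos k hkS).ne' heq
  · intro hRHS x hx y hy
    obtain ⟨hx1, hx2, _⟩ := Finset.mem_offDiag.1 hx
    obtain ⟨hy1, hy2, _⟩ := Finset.mem_offDiag.1 hy
    rw [show a x.1 = a y.1 from hRHS _ _ (hS1 _ hx1) (hS1 _ hy1),
      show a x.2 = a y.2 from hRHS _ _ (hS1 _ hx2) (hS1 _ hy2)]


theorem graph_energy_eq_mcclelland_bound_iff {n : ℕ} (G : SimpleGraph (Fin n))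
    [DecidableRel G.Adj] (m : ℕ) (hm : m = G.edgeFinset.card)
    (hiso : ∀ v, 0 < G.degree v)
    (κ : ℕ) (hκ : κ = G.nullity) :
    G.energy =
      Real.sqrt (2 * m +
        ((n : ℝ) - κ) * ((n : ℝ) - κ - 1) *
          |G.prodNonzeroEig| ^ ((2 : ℝ) / ((n : ℝ) - κ))) ↔
    ∀ i j, (G.adjMatrix_isHermitian).eigenvalues i ≠ 0 →
      (G.adjMatrix_isHermitian).eigenvalues j ≠ 0 →
      |(G.adjMatrix_isHermitian).eigenvalues i| =
        |(G.adjMatrix_isHermitian).eigenvalues j| := by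
  rcases Nat.eq_zero_or_pos n with rfl | hn
  · have hκ0 : κ = 0 := by rw [hκ, SimpleGraph.nullity]; simp
    have hm0 : m = 0 := by
      rw [hm, Finset.card_eq_zero]
      apply Finset.eq_empty_of_forall_notMem
      intro e
      induction e using Sym2.ind with
      | _ x y => exact x.elim0
    constructor
    · intro _ i
      exact i.elim0
    · intro _
      rw [SimpleGraph.energy]
      rw [Finset.univ_eq_empty, Finset.sum_empty, hκ0, hm0]
      norm_num
  · have hm0 : 0 < m := by
      rw [hm]
      by_contra hle
      have hcz : G.edgeFinset.card = 0 := by omega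
      have h2 := G.sum_degrees_eq_twice_card_edges
      rw [hcz] at h2
      have hd : G.degree ⟨0, hn⟩ ≤ ∑ i, G.degree i :=
        Finset.single_le_sum (f := fun i => G.degree i) (fun i _ => Nat.zero_le _)
          (Finset.mem_univ (⟨0, hn⟩ : Fin n))
      have := hiso ⟨0, hn⟩
      omega
    have h0 : ∑ i, (G.adjMatrix_isHermitian).eigenvalues i = 0 := by
      rw [← trace_eq_sum_eig]
      exact G.trace_adjMatrix (α := ℝ)
    have h2 : ∑ i, (G.adjMatrix_isHermitian).eigenvalues i ^ 2 = 2 * m := by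
      rw [← trace_sq_eq, hm]
      rw [Matrix.trace]
      have hdiag : ∀ i, (G.adjMatrix ℝ * G.adjMatrix ℝ).diag i = (G.degree i : ℝ) := fun i =>
        G.adjMatrix_mul_self_apply_self i
      rw [Finset.sum_congr rfl fun i _ => hdiag i, ← Nat.cast_sum,
        SimpleGraph.sum_degrees_eq_twice_card_edges]
      push_cast
      ring
    set S : Finset (Fin n) :=
      Finset.univ.filter (fun i => (G.adjMatrix_isHermitian).eigenvalues i ≠ 0) with hSdef
    have hpart : κ + S.card = n := by
      rw [hκ, SimpleGraph.nullity, hSdef]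
      have := Finset.card_filter_add_card_filter_not
        (s := (Finset.univ : Finset (Fin n)))
        (p := fun i => (G.adjMatrix_isHermitian).eigenvalues i = 0)
      simpa using this
    have hcast : ((n:ℝ) - κ) = (S.card : ℝ) := by
      have : (κ:ℝ) + (S.card : ℝ) = n := by exact_mod_cast hpart
      linarith
    rw [SimpleGraph.energy, SimpleGraph.prodNonzeroEig, hcast]
    exact key_iff _ m hm0 h0 h2 S hSdef
end

section
/- Let G be a connected finite simple graph with n ≥ 2 vertices and m edges, and let κ = η(G) be its nullity. Then E(G) = sqrt( 2m + (n−κ)(n−κ−1)·|Υ_{n−κ}(G)|^{2/(n−κ)} ) holds if and only if G is isomorphic to a complete bipartite graph K_{a,b} for some integers a, b ≥ 1 with a + b = n; in that case κ = n − 2. -/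
open Finset

section AuxMcClelland
open Matrix
open Finset Matrix

variable {n : ℕ}

lemma pow_spectral {A : Matrix (Fin n) (Fin n) ℝ} (hA : A.IsHermitian) (k : ℕ) :
    A ^ k = (hA.eigenvectorUnitary : Matrix (Fin n) (Fin n) ℝ) *
      (Matrix.diagonal hA.eigenvalues) ^ k *
      (star (hA.eigenvectorUnitary : Matrix (Fin n) (Fin n) ℝ)) := by
  have hsp := hA.spectral_theorem
  rw [RCLike.ofReal_real_eq_id] at hsp
  simp only [Function.comp_def, id_eq] at hsp
  rw [Unitary.conjStarAlgAut_apply] at hsp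
  set U : Matrix (Fin n) (Fin n) ℝ := (hA.eigenvectorUnitary : Matrix (Fin n) (Fin n) ℝ) with hU
  set D : Matrix (Fin n) (Fin n) ℝ := Matrix.diagonal hA.eigenvalues with hD
  have h1 : star U * U = 1 := Matrix.mem_unitaryGroup_iff'.mp hA.eigenvectorUnitary.2
  have h2 : ∀ X Y : Matrix (Fin n) (Fin n) ℝ, X * star U * (U * Y) = X * Y := by
    intro X Y
    rw [Matrix.mul_assoc X (star U) _, ← Matrix.mul_assoc (star U) U Y, h1, Matrix.one_mul]
  induction k with
  | zero =>
    simp [Matrix.mem_unitaryGroup_iff.mp hA.eigenvectorUnitary.2]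
    exact (Matrix.mem_unitaryGroup_iff.mp hA.eigenvectorUnitary.2).symm
  | succ k ih =>
    calc A ^ (k+1) = U * D ^ k * star U * A := by rw [pow_succ, ih]
    _ = U * D ^ k * star U * (U * (diagonal fun x => hA.eigenvalues x) * star U) := by
        rw [← hsp]
    _ = U * D ^ (k+1) * star U := by
        rw [show (diagonal fun x => hA.eigenvalues x) = D from rfl,
          Matrix.mul_assoc U D (star U), h2, pow_succ, ← Matrix.mul_assoc, ← Matrix.mul_assoc]

lemma trace_pow_eq {A : Matrix (Fin n) (Fin n) ℝ} (hA : A.IsHermitian) (k : ℕ) :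
    (A ^ k).trace = ∑ i, hA.eigenvalues i ^ k := by
  rw [pow_spectral hA k, Matrix.trace_mul_cycle,
    Matrix.mem_unitaryGroup_iff'.mp hA.eigenvectorUnitary.2, Matrix.one_mul,
    Matrix.diagonal_pow, Matrix.trace_diagonal]
  rfl

lemma cube_eq_smul_iff {A : Matrix (Fin n) (Fin n) ℝ} (hA : A.IsHermitian) (c : ℝ) :
    A ^ 3 = c • A ↔ ∀ i, hA.eigenvalues i ^ 3 = c * hA.eigenvalues i := by
  set U : Matrix (Fin n) (Fin n) ℝ := (hA.eigenvectorUnitary : Matrix (Fin n) (Fin n) ℝ) with hU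
  set D : Matrix (Fin n) (Fin n) ℝ := Matrix.diagonal hA.eigenvalues with hD
  have h1 : star U * U = 1 := Matrix.mem_unitaryGroup_iff'.mp hA.eigenvectorUnitary.2
  have h3 : A ^ 3 = U * D ^ 3 * star U := pow_spectral hA 3
  have hsp : A = U * D * star U := by
    have := pow_spectral hA 1
    simpa using this
  constructor
  · intro h i
    have : U * D ^ 3 * star U = c • (U * D * star U) := by rw [← h3, ← hsp, h]
    have hDD : D ^ 3 = c • D := by
      have h4 := congrArg (fun M => star U * M * U) this
      simp only [Matrix.smul_mul, Matrix.mul_smul] at h4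
      simp only [Matrix.mul_assoc] at h4
      simp only [h1, Matrix.mul_one] at h4
      rw [← Matrix.mul_assoc, h1, Matrix.one_mul] at h4
      rw [← Matrix.mul_assoc, h1, Matrix.one_mul] at h4
      exact h4
    have h5 := congrFun (congrFun hDD i) i
    rw [hD] at h5
    simp only [Matrix.diagonal_pow] at h5
    simpa [Matrix.diagonal_apply_eq, Pi.pow_apply] using h5
  · intro h
    have hDD : D ^ 3 = c • D := by
      have hfun : hA.eigenvalues ^ 3 = c • hA.eigenvalues := by
        funext i
        show hA.eigenvalues i ^ 3 = c * hA.eigenvalues i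
        exact h i
      rw [hD, Matrix.diagonal_pow, hfun, Matrix.diagonal_smul]
    rw [h3, hDD, hsp]
    simp only [Matrix.mul_smul, Matrix.smul_mul]

open Finset

lemma offDiag_sum_log {ι : Type*} [DecidableEq ι] (S : Finset ι) (g : ι → ℝ) :
    ∑ p ∈ S.offDiag, (g p.1 + g p.2) =
      2 * (S.card : ℝ) * (∑ i ∈ S, g i) - 2 * ∑ i ∈ S, g i := by
  have hsplit : ∑ p ∈ S.diag, (g p.1 + g p.2) + ∑ p ∈ S.offDiag, (g p.1 + g p.2)
      = ∑ p ∈ S ×ˢ S, (g p.1 + g p.2) := by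
    rw [← Finset.sum_union (Finset.disjoint_diag_offDiag S), Finset.diag_union_offDiag]
  have h1 : ∑ p ∈ S.diag, (g p.1 + g p.2) = 2 * ∑ i ∈ S, g i := by
    rw [Finset.sum_diag]
    rw [Finset.sum_add_distrib]
    ring
  have h2 : ∑ p ∈ S ×ˢ S, (g p.1 + g p.2) = 2 * (S.card : ℝ) * ∑ i ∈ S, g i := by
    rw [Finset.sum_product]
    simp only [Finset.sum_add_distrib, Finset.sum_const, nsmul_eq_mul]
    rw [← Finset.mul_sum]
    ring
  linarith [hsplit, h1, h2]

lemma amgm_const {ι : Type*} [DecidableEq ι] (S : Finset ι) (hS : 3 ≤ S.card) (x : ι → ℝ)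
    (hx : ∀ i ∈ S, 0 < x i)
    (heq : ∑ p ∈ S.offDiag, x p.1 * x p.2 =
      (S.card : ℝ) * ((S.card : ℝ) - 1) * (∏ i ∈ S, x i) ^ ((2 : ℝ) / (S.card : ℝ))) :
    ∀ i ∈ S, ∀ j ∈ S, x i = x j := by
  set r : ℕ := S.card with hr
  have hr3 : (3 : ℝ) ≤ (r : ℕ) := by exact_mod_cast hS
  have hrpos : (0 : ℝ) < r := by linarith
  set N : ℕ := S.offDiag.card with hN
  have hNval : (N : ℝ) = (r : ℝ) * ((r : ℝ) - 1) := by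
    rw [hN, Finset.offDiag_card, ← hr]
    rw [Nat.cast_sub (by nlinarith)]
    push_cast
    ring
  have hNpos : (0 : ℝ) < N := by rw [hNval]; nlinarith
  set L : ℝ := ∑ i ∈ S, Real.log (x i) with hL
  -- sum of the p's
  have hsum_p : ∑ p ∈ S.offDiag, (Real.log (x p.1) + Real.log (x p.2))
      = 2 * (r : ℝ) * L - 2 * L := offDiag_sum_log S (fun i => Real.log (x i))
  have hprod : (∏ i ∈ S, x i) ^ ((2 : ℝ) / (r : ℝ)) = Real.exp (2 * L / r) := by
    have hppos : 0 < ∏ i ∈ S, x i := Finset.prod_pos hx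
    rw [Real.rpow_def_of_pos hppos, Real.log_prod (fun i hi => (hx i hi).ne'), ← hL]
    ring_nf
  -- apply the equality case of Jensen for exp
  have key := strictConvexOn_exp.eq_of_le_map_sum
    (t := S.offDiag) (w := fun _ => (N : ℝ)⁻¹)
    (p := fun q => Real.log (x q.1) + Real.log (x q.2))
    (fun i _ => by positivity)
    (by simp [Finset.sum_const, ← hN]; field_simp)
    (fun i _ => Set.mem_univ _)
    (by
      -- ∑ w • f p ≤ f (∑ w • p)
      have e1 : ∑ q ∈ S.offDiag, (N : ℝ)⁻¹ • Real.exp (Real.log (x q.1) + Real.log (x q.2))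
          = (N : ℝ)⁻¹ * ∑ q ∈ S.offDiag, x q.1 * x q.2 := by
        rw [Finset.mul_sum]
        refine Finset.sum_congr rfl fun q hq => ?_
        rw [Finset.mem_offDiag] at hq
        rw [Real.exp_add, Real.exp_log (hx _ hq.1), Real.exp_log (hx _ hq.2.1)]
        simp [smul_eq_mul]
      have e2 : ∑ q ∈ S.offDiag, (N : ℝ)⁻¹ • (Real.log (x q.1) + Real.log (x q.2))
          = 2 * L / r := by
        simp only [smul_eq_mul, ← Finset.mul_sum]
        rw [hsum_p]
        have hstep : 2 * (r : ℝ) * L - 2 * L = (N : ℝ) * (2 * L / r) := by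
          rw [hNval]
          field_simp
        rw [hstep, inv_mul_cancel_left₀ hNpos.ne']
      rw [e1, e2, heq, ← hNval, hprod]
      rw [inv_mul_cancel_left₀ hNpos.ne']
      )
  -- key : all p equal on offDiag
  intro i hi j hj
  by_cases hij : i = j
  · rw [hij]
  · -- pick k ∈ S distinct from i and j
    have hcard : 0 < (S \ {i, j}).card := by
      have h2 : ({i, j} : Finset ι).card ≤ 2 := Finset.card_insert_le _ _ |>.trans (by simp)
      have h3 := Finset.le_card_sdiff ({i, j} : Finset ι) S
      omega
    obtain ⟨k, hk⟩ := Finset.card_pos.mp hcard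
    rw [Finset.mem_sdiff, Finset.mem_insert, Finset.mem_singleton] at hk
    push_neg at hk
    obtain ⟨hkS, hki, hkj⟩ := hk
    have h1 := key (j := (k, i)) (Finset.mem_offDiag.mpr ⟨hkS, hi, hki⟩)
      (k := (k, j)) (Finset.mem_offDiag.mpr ⟨hkS, hj, hkj⟩)
    simp only at h1
    have : Real.log (x i) = Real.log (x j) := by linarith [h1]
    calc x i = Real.exp (Real.log (x i)) := (Real.exp_log (hx i hi)).symm
    _ = Real.exp (Real.log (x j)) := by rw [this]
    _ = x j := Real.exp_log (hx j hj)

open Finset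

variable {n : ℕ}

lemma walk_parity {V : Type*} {G : SimpleGraph V}
    (Hw : ∀ u x y v, G.Adj u x → G.Adj x y → G.Adj y v → G.Adj u v) :
    ∀ {u v : V} (w : G.Walk u v),
      (Odd w.length → G.Adj u v) ∧ (Even w.length → u = v ∨ ∃ k, G.Adj u k ∧ G.Adj k v) := by
  intro u v w
  induction w with
  | nil => exact ⟨fun h => by simp at h, fun _ => Or.inl rfl⟩
  | @cons a x v hax w ih =>
    constructor
    · intro hodd
      have heven : Even w.length := by
        rcases Nat.even_or_odd w.length with h | h
        · exact h
        · exfalso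
          have : Even (w.length + 1) := Odd.add_one h
          simp only [SimpleGraph.Walk.length_cons] at hodd
          exact (Nat.not_even_iff_odd.mpr hodd) this
      rcases ih.2 heven with rfl | ⟨k, hk1, hk2⟩
      · exact hax
      · exact Hw a x k v hax hk1 hk2
    · intro heven
      simp only [SimpleGraph.Walk.length_cons, Nat.even_add_one] at heven
      exact Or.inr ⟨x, hax, ih.1 (Nat.not_even_iff_odd.mp heven)⟩

lemma exists_bipartition {V : Type*} {G : SimpleGraph V} (hconn : G.Connected)
    (Hw : ∀ u x y v, G.Adj u x → G.Adj x y → G.Adj y v → G.Adj u v) [DecidableRel G.Adj] :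
    ∃ s : V → Bool, ∀ u v, G.Adj u v ↔ s u ≠ s v := by
  -- auxiliary fact F1
  have F1 : ∀ u v x : V, u ≠ v → ¬G.Adj u v → G.Adj u x → G.Adj v x := by
    intro u v x huv hnadj hux
    obtain ⟨w⟩ := hconn.preconnected u v
    rcases Nat.even_or_odd w.length with h | h
    · rcases (walk_parity Hw w).2 h with rfl | ⟨k, hk1, hk2⟩
      · exact absurd rfl huv
      · exact Hw v k u x hk2.symm hk1.symm hux
    · exact absurd ((walk_parity Hw w).1 h) hnadj
  have TF : ∀ a b c : V, G.Adj a b → G.Adj b c → G.Adj a c → False := by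
    intro a b c hab hbc hac
    exact G.loopless.irrefl a (Hw a b c a hab hbc hac.symm)
  obtain ⟨u₀⟩ := hconn.nonempty
  refine ⟨fun v => decide (G.Adj u₀ v), fun u v => ?_⟩
  rw [ne_eq, decide_eq_decide]
  by_cases hp : G.Adj u₀ u <;> by_cases hq : G.Adj u₀ v
  · exact iff_of_false (fun h => TF u₀ u v hp h hq) (by tauto)
  · refine iff_of_true ?_ (by tauto)
    by_cases hv : v = u₀
    · subst hv; exact hp.symm
    · exact (F1 u₀ v u (Ne.symm hv) hq hp).symm
  · refine iff_of_true ?_ (by tauto)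
    by_cases hu : u = u₀
    · subst hu; exact hq
    · exact F1 u₀ u v (Ne.symm hu) hp hq
  · refine iff_of_false ?_ (by tauto)
    intro h
    by_cases hu : u = u₀
    · subst hu; exact hq h
    · exact hq (F1 u u₀ v hu (fun hh => hp hh.symm) h)

lemma cbg_adj {a b : ℕ} (x y : Fin a ⊕ Fin b) :
    (completeBipartiteGraph (Fin a) (Fin b)).Adj x y ↔ x.isLeft ≠ y.isLeft := by
  rcases x with x | x <;> rcases y with y | y <;> simp [completeBipartiteGraph]

lemma s_of_iso {a b : ℕ} {G : SimpleGraph (Fin n)}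
    (e : G ≃g completeBipartiteGraph (Fin a) (Fin b)) :
    ∀ u v, G.Adj u v ↔ (fun w => (e w).isLeft) u ≠ (fun w => (e w).isLeft) v := by
  intro u v
  rw [← e.map_adj_iff, cbg_adj]

lemma iso_exists {G : SimpleGraph (Fin n)} [DecidableRel G.Adj] (s : Fin n → Bool)
    (hAdj : ∀ u v, G.Adj u v ↔ s u ≠ s v) (hedge : ∃ u v, G.Adj u v) :
    ∃ a b : ℕ, 1 ≤ a ∧ 1 ≤ b ∧ a + b = n ∧
      Nonempty (G ≃g completeBipartiteGraph (Fin a) (Fin b)) := by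
  classical
  set a := #(univ.filter fun u : Fin n => s u = true) with ha
  set b := #(univ.filter fun u : Fin n => ¬ (s u = true)) with hb
  refine ⟨a, b, ?_, ?_, ?_, ?_⟩
  · obtain ⟨u, v, huv⟩ := hedge
    have hne := (hAdj u v).mp huv
    have : ∃ w, s w = true := by
      by_cases h : s u = true
      · exact ⟨u, h⟩
      · refine ⟨v, ?_⟩
        by_cases h' : s v = true
        · exact h'
        · have h1 : s u = false := by simpa using h
          have h2 : s v = false := by simpa using h'
          exact absurd (h1.trans h2.symm) hne
    obtain ⟨w, hw⟩ := this
    have : w ∈ univ.filter fun u : Fin n => s u = true := by simp [hw]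
    exact Nat.one_le_iff_ne_zero.mpr (Finset.card_ne_zero_of_mem this)
  · obtain ⟨u, v, huv⟩ := hedge
    have hne := (hAdj u v).mp huv
    have : ∃ w, ¬ (s w = true) := by
      by_cases h : s u = true
      · refine ⟨v, ?_⟩
        intro h'
        exact hne (h.trans h'.symm)
      · exact ⟨u, h⟩
    obtain ⟨w, hw⟩ := this
    have : w ∈ univ.filter fun u : Fin n => ¬ (s u = true) := by simp [hw]
    exact Nat.one_le_iff_ne_zero.mpr (Finset.card_ne_zero_of_mem this)
  · rw [ha, hb]
    rw [Finset.card_filter_add_card_filter_not]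
    simp
  · have eqA : {u : Fin n // s u = true} ≃ Fin a :=
      Fintype.equivFinOfCardEq (by rw [Fintype.card_subtype])
    have eqB : {u : Fin n // ¬ (s u = true)} ≃ Fin b :=
      Fintype.equivFinOfCardEq (by rw [Fintype.card_subtype])
    set e : Fin n ≃ (Fin a ⊕ Fin b) :=
      (Equiv.sumCompl (fun u : Fin n => s u = true)).symm.trans (Equiv.sumCongr eqA eqB) with he
    have hside : ∀ u, (e u).isLeft = s u := by
      intro u
      by_cases h : s u = true
      · simp [he, Equiv.sumCompl_symm_apply_of_pos h, h]
      · have h' : s u = false := by simpa using h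
        simp [he, Equiv.sumCompl_symm_apply_of_neg h, h']
    refine ⟨⟨e, ?_⟩⟩
    intro u v
    rw [cbg_adj, hside, hside, hAdj]

open Finset

variable {n : ℕ}

lemma trace_sq (G : SimpleGraph (Fin n)) [DecidableRel G.Adj] :
    ((G.adjMatrix ℝ) ^ 2).trace = 2 * (G.edgeFinset.card : ℝ) := by
  rw [pow_two, Matrix.trace]
  have : ∀ i, ((G.adjMatrix ℝ) * (G.adjMatrix ℝ)).diag i = (G.degree i : ℝ) := fun i =>
    G.adjMatrix_mul_self_apply_self i
  rw [Finset.sum_congr rfl fun i _ => this i]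
  rw [← Nat.cast_sum, SimpleGraph.sum_degrees_eq_twice_card_edges]
  push_cast
  ring

lemma cnt_sum (s : Fin n → Bool) (c : Bool) :
    ∑ y : Fin n, (if s y = c then (1:ℝ) else 0) = (#(univ.filter fun y => s y = c) : ℝ) := by
  rw [Finset.sum_boole]

section bip

variable {G : SimpleGraph (Fin n)} [DecidableRel G.Adj] (s : Fin n → Bool)
  (hAdj : ∀ u v, G.Adj u v ↔ s u ≠ s v)

include hAdj

lemma adj_entry (u v : Fin n) :
    G.adjMatrix ℝ u v = if s u ≠ s v then 1 else 0 := by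
  rw [SimpleGraph.adjMatrix_apply]
  by_cases h : G.Adj u v
  · rw [if_pos h, if_pos ((hAdj u v).mp h)]
  · rw [if_neg h, if_neg (fun hc => h ((hAdj u v).mpr hc))]

lemma bip_inner (x v : Fin n) :
    ∑ y, G.adjMatrix ℝ x y * G.adjMatrix ℝ y v =
      if s x = s v then (#(univ.filter fun y => s y = !(s x)) : ℝ) else 0 := by
  by_cases hxv : s x = s v
  · rw [if_pos hxv]
    rw [← cnt_sum s (!(s x))]
    
    refine Finset.sum_congr rfl fun y _ => ?_
    rw [adj_entry s hAdj, adj_entry s hAdj]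
    cases hy : s y <;> cases hx : s x <;>
      simp_all
  · rw [if_neg hxv]
    refine Finset.sum_eq_zero fun y _ => ?_
    rw [adj_entry s hAdj, adj_entry s hAdj]
    cases hy : s y <;> cases hx : s x <;> cases hv : s v <;>
      simp_all

lemma bip_cube :
    (G.adjMatrix ℝ) ^ 3 =
      ((#(univ.filter fun y : Fin n => s y = true) *
        #(univ.filter fun y : Fin n => s y = false) : ℕ) : ℝ) • G.adjMatrix ℝ := by
  set a := #(univ.filter fun y : Fin n => s y = true)
  set b := #(univ.filter fun y : Fin n => s y = false)
  ext u v
  have h3 : ((G.adjMatrix ℝ) ^ 3) u v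
      = ∑ x, G.adjMatrix ℝ u x * ∑ y, G.adjMatrix ℝ x y * G.adjMatrix ℝ y v := by
    rw [pow_succ', pow_two, Matrix.mul_apply]
    exact Finset.sum_congr rfl fun x _ => by rw [Matrix.mul_apply]
  rw [h3]
  rw [Finset.sum_congr rfl fun x _ => by rw [bip_inner s hAdj x v]]
  rw [Matrix.smul_apply, adj_entry s hAdj u v]
  by_cases huv : s u = s v
  · rw [if_neg (by simpa using huv), smul_zero]
    refine Finset.sum_eq_zero fun x _ => ?_
    by_cases hxv : s x = s v
    · rw [adj_entry s hAdj u x, if_neg (by rw [huv, hxv]; simp), zero_mul]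
    · rw [if_neg hxv, mul_zero]
  · have hvu : s v = !(s u) := by
      cases hu : s u <;> cases hv : s v <;> simp_all
    rw [if_pos (by simpa using huv), smul_eq_mul, mul_one]
    have hterm : ∀ x : Fin n, G.adjMatrix ℝ u x *
        (if s x = s v then ((#(univ.filter fun y => s y = !(s x)) : ℕ) : ℝ) else 0)
        = (#(univ.filter fun y => s y = s u) : ℝ) * (if s x = s v then (1:ℝ) else 0) := by
      intro x
      by_cases hxv : s x = s v
      · rw [if_pos hxv, if_pos hxv, adj_entry s hAdj u x,
          if_pos (by rw [hxv]; simpa using huv), one_mul, mul_one, hxv, hvu, Bool.not_not]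
      · rw [if_neg hxv, if_neg hxv, mul_zero, mul_zero]
    have hab : ∀ c : Bool, (#(univ.filter fun y => s y = c) : ℝ) *
        (#(univ.filter fun y => s y = !c) : ℝ)
        = ((a * b : ℕ) : ℝ) := by
      intro c
      cases c <;> simp only [Bool.not_false, Bool.not_true] <;> push_cast <;> ring
    rw [Finset.sum_congr rfl fun x _ => hterm x, ← Finset.mul_sum, cnt_sum s (s v), hvu]
    exact hab (s u)

end bip

end AuxMcClelland


section BipTrace
open Matrix Finset
variable {n : ℕ} {G : SimpleGraph (Fin n)} [DecidableRel G.Adj]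

lemma bip_trace_sq (s : Fin n → Bool) (hAdj : ∀ u v, G.Adj u v ↔ s u ≠ s v) :
    ((G.adjMatrix ℝ) ^ 2).trace =
      2 * ((#(univ.filter fun y : Fin n => s y = true) *
        #(univ.filter fun y : Fin n => s y = false) : ℕ) : ℝ) := by
  set a := #(univ.filter fun y : Fin n => s y = true) with hadef
  set b := #(univ.filter fun y : Fin n => s y = false) with hbdef
  rw [pow_two, Matrix.trace]
  have hdiag : ∀ u : Fin n, ((G.adjMatrix ℝ) * (G.adjMatrix ℝ)).diag u
      = (#(univ.filter fun y => s y = !(s u)) : ℝ) := by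
    intro u
    have := bip_inner s hAdj u u
    rw [if_pos rfl] at this
    exact (Matrix.mul_apply.trans this : _)
  rw [Finset.sum_congr rfl fun u _ => hdiag u]
  have hstep : ∀ u : Fin n, (#(univ.filter fun y => s y = !(s u)) : ℝ)
      = (if s u = true then (b : ℝ) else 0) + (if s u = false then (a : ℝ) else 0) := by
    intro u
    cases h : s u <;> simp [h, hadef, hbdef]
  rw [Finset.sum_congr rfl fun u _ => hstep u, Finset.sum_add_distrib]
  have e1 : ∑ u : Fin n, (if s u = true then (b : ℝ) else 0) = (a : ℝ) * b := by
    rw [Finset.sum_congr rfl (fun u _ => by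
      rw [show (if s u = true then (b : ℝ) else 0) = (b : ℝ) * (if s u = true then 1 else 0) by
        split_ifs <;> ring]),
      ← Finset.mul_sum, cnt_sum s true]
    ring
  have e2 : ∑ u : Fin n, (if s u = false then (a : ℝ) else 0) = (b : ℝ) * a := by
    rw [Finset.sum_congr rfl (fun u _ => by
      rw [show (if s u = false then (a : ℝ) else 0) = (a : ℝ) * (if s u = false then 1 else 0) by
        split_ifs <;> ring]),
      ← Finset.mul_sum, cnt_sum s false]
    ring
  rw [e1, e2]
  push_cast
  ring

end BipTrace


section CoreMcClelland
open Matrix Finset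

variable {n : ℕ}

lemma exists_edge {G : SimpleGraph (Fin n)} (hconn : G.Connected) (hn : 2 ≤ n) :
    ∃ u v : Fin n, G.Adj u v := by
  have h0 : (0 : ℕ) < n := by omega
  have h1 : (1 : ℕ) < n := by omega
  have hne : (⟨0, h0⟩ : Fin n) ≠ ⟨1, h1⟩ := by simp [Fin.ext_iff]
  obtain ⟨w⟩ := hconn.preconnected ⟨0, h0⟩ ⟨1, h1⟩
  cases w with
  | cons h _ => exact ⟨_, _, h⟩

lemma Hwalk_of_cube {G : SimpleGraph (Fin n)} [DecidableRel G.Adj] {c : ℝ} (hc : c ≠ 0)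
    (hcube : (G.adjMatrix ℝ) ^ 3 = c • G.adjMatrix ℝ) :
    ∀ u x y v, G.Adj u x → G.Adj x y → G.Adj y v → G.Adj u v := by
  intro u x y v hux hxy hyv
  set A := G.adjMatrix ℝ with hA
  have hnonneg : ∀ i j, 0 ≤ A i j := by
    intro i j
    rw [hA, SimpleGraph.adjMatrix_apply]
    split_ifs <;> norm_num
  have h3 : (A ^ 3) u v = ∑ p, A u p * ∑ q, A p q * A q v := by
    rw [pow_succ', pow_two, Matrix.mul_apply]
    exact Finset.sum_congr rfl fun p _ => by rw [Matrix.mul_apply]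
  have hterm : (1 : ℝ) ≤ ∑ q, A x q * A q v := by
    have : A x y * A y v = 1 := by
      rw [hA]; simp [hxy, hyv]
    calc (1:ℝ) = A x y * A y v := this.symm
    _ ≤ ∑ q, A x q * A q v :=
      Finset.single_le_sum (f := fun q => A x q * A q v)
        (fun q _ => mul_nonneg (hnonneg x q) (hnonneg q v)) (Finset.mem_univ y)
  have hpos : 0 < (A ^ 3) u v := by
    rw [h3]
    have h1 : A u x * ∑ q, A x q * A q v ≥ 1 * 1 := by
      have hux1 : A u x = 1 := by rw [hA]; simp [hux]
      rw [hux1, one_mul]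
      linarith
    have : (1:ℝ) ≤ ∑ p, A u p * ∑ q, A p q * A q v := by
      calc (1:ℝ) = 1 * 1 := by norm_num
      _ ≤ A u x * ∑ q, A x q * A q v := h1
      _ ≤ ∑ p, A u p * ∑ q, A p q * A q v := by
          refine Finset.single_le_sum (f := fun p => A u p * ∑ q, A p q * A q v)
            (fun p _ => ?_) (Finset.mem_univ x)
          refine mul_nonneg (hnonneg u p) (Finset.sum_nonneg fun q _ => ?_)
          exact mul_nonneg (hnonneg p q) (hnonneg q v)
    linarith
  by_contra hadj
  have : A u v = 0 := by rw [hA]; simp [hadj]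
  rw [hcube] at hpos
  rw [Matrix.smul_apply, this, smul_zero] at hpos
  exact lt_irrefl 0 hpos

lemma core_bip {G : SimpleGraph (Fin n)} [DecidableRel G.Adj] (hconn : G.Connected)
    (hn : 2 ≤ n) (s : Fin n → Bool) (hAdj : ∀ u v, G.Adj u v ↔ s u ≠ s v) :
    G.nullity = n - 2 ∧
    G.energy = Real.sqrt (2 * (G.edgeFinset.card : ℝ) +
      ((n : ℝ) - (G.nullity : ℝ)) * ((n : ℝ) - (G.nullity : ℝ) - 1) *
        |G.prodNonzeroEig| ^ ((2 : ℝ) / ((n : ℝ) - (G.nullity : ℝ)))) := by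
  classical
  obtain ⟨u₀, v₀, hedge⟩ := exists_edge hconn hn
  set hA := G.adjMatrix_isHermitian with hhA
  set lam := hA.eigenvalues with hlam
  set a := #(univ.filter fun y : Fin n => s y = true) with hadef
  set b := #(univ.filter fun y : Fin n => s y = false) with hbdef
  -- parts nonempty
  have hne := (hAdj u₀ v₀).mp hedge
  have ha : 0 < a := by
    have hex : ∃ w, s w = true := by
      cases h : s u₀ with
      | true => exact ⟨u₀, h⟩
      | false =>
        cases h' : s v₀ with
        | true => exact ⟨v₀, h'⟩
        | false => exact absurd (h.trans h'.symm) hne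
    obtain ⟨w, hw⟩ := hex
    exact Finset.card_pos.mpr ⟨w, by simp [hw]⟩
  have hb : 0 < b := by
    have hex : ∃ w, s w = false := by
      cases h : s u₀ with
      | false => exact ⟨u₀, h⟩
      | true =>
        cases h' : s v₀ with
        | false => exact ⟨v₀, h'⟩
        | true => exact absurd (h.trans h'.symm) hne
    obtain ⟨w, hw⟩ := hex
    exact Finset.card_pos.mpr ⟨w, by simp [hw]⟩
  set c : ℝ := ((a * b : ℕ) : ℝ) with hcdef
  have hc : 0 < c := by
    rw [hcdef]
    have : 0 < a * b := Nat.mul_pos ha hb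
    exact_mod_cast this
  set t := Real.sqrt c with htdef
  have ht : 0 < t := Real.sqrt_pos.mpr hc
  have ht2 : t ^ 2 = c := Real.sq_sqrt hc.le
  -- eigenvalue cubic relation
  have hcube := bip_cube s hAdj
  have heig : ∀ i, lam i ^ 3 = c * lam i := by
    intro i
    exact (cube_eq_smul_iff hA c).mp (by rw [← hcdef] at hcube; exact hcube) i
  have hval : ∀ i, lam i = 0 ∨ lam i = t ∨ lam i = -t := by
    intro i
    have h0 : lam i * (lam i - t) * (lam i + t) = 0 := by
      linear_combination heig i - lam i * ht2
    rcases mul_eq_zero.mp h0 with h1 | h1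
    · rcases mul_eq_zero.mp h1 with h2 | h2
      · exact Or.inl h2
      · exact Or.inr (Or.inl (by linarith [sub_eq_zero.mp h2]))
    · exact Or.inr (Or.inr (by linarith [h1]))
  -- the three classes
  set P := univ.filter fun i => lam i = t with hPdef
  set N := univ.filter fun i => lam i = -t with hNdef
  set Z := univ.filter fun i => lam i = 0 with hZdef
  have htne : t ≠ -t := by intro h; nlinarith
  have hPN : Disjoint P N := by
    rw [Finset.disjoint_left]
    intro i hiP hiN
    rw [hPdef, Finset.mem_filter] at hiP
    rw [hNdef, Finset.mem_filter] at hiN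
    exact htne (hiP.2.symm.trans hiN.2)
  have hPNZ : Disjoint (P ∪ N) Z := by
    rw [Finset.disjoint_left]
    intro i hi hiZ
    rw [hZdef, Finset.mem_filter] at hiZ
    rcases Finset.mem_union.mp hi with h | h
    · rw [hPdef, Finset.mem_filter] at h
      have h5 := h.2
      rw [hiZ.2] at h5
      exact ht.ne' h5.symm
    · rw [hNdef, Finset.mem_filter] at h
      have h5 := h.2
      rw [hiZ.2] at h5
      have : t = 0 := by linarith
      exact ht.ne' this
  have huniv : (P ∪ N) ∪ Z = univ := by
    apply Finset.eq_univ_of_forall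
    intro i
    rcases hval i with h | h | h
    · exact Finset.mem_union_right _ (by rw [hZdef]; simp [h])
    · exact Finset.mem_union_left _ (Finset.mem_union_left _ (by rw [hPdef]; simp [h]))
    · exact Finset.mem_union_left _ (Finset.mem_union_right _ (by rw [hNdef]; simp [h]))
  have hpart : ∀ f : Fin n → ℝ, ∑ i, f i = ∑ i ∈ P, f i + ∑ i ∈ N, f i + ∑ i ∈ Z, f i := by
    intro f
    rw [← Finset.sum_union hPN, ← Finset.sum_union hPNZ, huniv]
  -- sums over classes
  have hsumP : ∀ (g : ℝ → ℝ), ∑ i ∈ P, g (lam i) = (#P : ℝ) * g t := by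
    intro g
    have h1 : ∑ i ∈ P, g (lam i) = ∑ _i ∈ P, g t :=
      Finset.sum_congr rfl fun i hi => by
        rw [hPdef, Finset.mem_filter] at hi; rw [hi.2]
    rw [h1, Finset.sum_const, nsmul_eq_mul]
  have hsumN : ∀ (g : ℝ → ℝ), ∑ i ∈ N, g (lam i) = (#N : ℝ) * g (-t) := by
    intro g
    have h1 : ∑ i ∈ N, g (lam i) = ∑ _i ∈ N, g (-t) :=
      Finset.sum_congr rfl fun i hi => by
        rw [hNdef, Finset.mem_filter] at hi; rw [hi.2]
    rw [h1, Finset.sum_const, nsmul_eq_mul]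
  have hsumZ : ∀ (g : ℝ → ℝ), ∑ i ∈ Z, g (lam i) = (#Z : ℝ) * g 0 := by
    intro g
    have h1 : ∑ i ∈ Z, g (lam i) = ∑ _i ∈ Z, g 0 :=
      Finset.sum_congr rfl fun i hi => by
        rw [hZdef, Finset.mem_filter] at hi; rw [hi.2]
    rw [h1, Finset.sum_const, nsmul_eq_mul]
  -- trace identities
  have hsum0 : ∑ i, lam i = 0 := by
    have h1 := trace_pow_eq hA 1
    simp only [pow_one] at h1
    rw [← h1, SimpleGraph.trace_adjMatrix]
  have hsum2 : ∑ i, lam i ^ 2 = 2 * c := by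
    have h1 := trace_pow_eq hA 2
    rw [← h1, bip_trace_sq s hAdj]
  -- cardinalities
  have hPeqN : (#P : ℝ) = (#N : ℝ) := by
    have hthis0 := hpart (fun i => lam i)
    rw [hsum0, hsumP (fun x => x), hsumN (fun x => x), hsumZ (fun x => x)] at hthis0
    have this := hthis0
    have h2 : (#P : ℝ) * t - (#N : ℝ) * t = 0 := by
      rw [mul_zero] at this
      linarith
    have h3 : ((#P : ℝ) - #N) * t = 0 := by linarith
    rcases mul_eq_zero.mp h3 with h | h
    · linarith
    · exact absurd h ht.ne'
  have hPN2 : (#P : ℝ) + (#N : ℝ) = 2 := by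
    have hthis := hpart (fun i => lam i ^ 2)
    rw [hsum2, hsumP (fun x => x ^ 2), hsumN (fun x => x ^ 2), hsumZ (fun x => x ^ 2)] at hthis
    have hneg : (-t) ^ 2 = t ^ 2 := by ring
    have hzero : (0 : ℝ) ^ 2 = 0 := by ring
    rw [hneg, hzero, mul_zero, add_zero, ht2] at hthis
    have : ((#P : ℝ) + #N) * c = 2 * c := by linarith
    exact mul_right_cancel₀ hc.ne' this
  have hP1 : #P = 1 ∧ #N = 1 := by
    have h1 : (#P : ℝ) = 1 := by linarith
    have h2 : (#N : ℝ) = 1 := by linarith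
    exact ⟨by exact_mod_cast h1, by exact_mod_cast h2⟩
  have hcards : #P + #N + #Z = n := by
    have := congrArg Finset.card huniv
    rw [Finset.card_union_of_disjoint hPNZ, Finset.card_union_of_disjoint hPN,
      Finset.card_univ, Fintype.card_fin] at this
    exact this
  have hnull : G.nullity = n - 2 := by
    have : G.nullity = #Z := rfl
    omega
  refine ⟨hnull, ?_⟩
  -- energy
  have hen : G.energy = 2 * t := by
    have : G.energy = ∑ i, |lam i| := rfl
    rw [this, hpart (fun i => |lam i|), hsumP (fun x => |x|), hsumN (fun x => |x|),
      hsumZ (fun x => |x|), hP1.1, hP1.2, abs_of_pos ht, abs_neg, abs_of_pos ht]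
    simp
    ring
  -- product of nonzero eigenvalues
  have hSeq : (univ.filter fun i => lam i ≠ 0) = P ∪ N := by
    ext i
    rw [Finset.mem_union, hPdef, hNdef, Finset.mem_filter, Finset.mem_filter,
      Finset.mem_filter]
    simp only [Finset.mem_univ, true_and]
    constructor
    · intro h
      rcases hval i with h' | h' | h'
      · exact absurd h' h
      · exact Or.inl h'
      · exact Or.inr h'
    · rintro (h | h)
      · rw [h]; exact ht.ne'
      · rw [h]
        intro hc'
        exact ht.ne' (by linarith)
  have hprod : G.prodNonzeroEig = -c := by
    have h0 : G.prodNonzeroEig = ∏ i ∈ (univ.filter fun i => lam i ≠ 0), lam i := rfl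
    rw [h0, hSeq, Finset.prod_union hPN]
    have e1 : ∏ i ∈ P, lam i = t ^ (#P) := by
      have h1 : ∏ i ∈ P, lam i = ∏ _i ∈ P, t :=
        Finset.prod_congr rfl fun i hi => by
          rw [hPdef, Finset.mem_filter] at hi; rw [hi.2]
      rw [h1, Finset.prod_const]
    have e2 : ∏ i ∈ N, lam i = (-t) ^ (#N) := by
      have h1 : ∏ i ∈ N, lam i = ∏ _i ∈ N, (-t) :=
        Finset.prod_congr rfl fun i hi => by
          rw [hNdef, Finset.mem_filter] at hi; rw [hi.2]
      rw [h1, Finset.prod_const]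
    rw [e1, e2, hP1.1, hP1.2, pow_one, pow_one, ← ht2]
    ring
  -- edge count
  have hmr : (G.edgeFinset.card : ℝ) = c := by
    have h1 := trace_sq G
    have h2 := bip_trace_sq s hAdj
    rw [h1] at h2
    linarith
  -- final formula
  have hnr : ((G.nullity : ℕ) : ℝ) = (n : ℝ) - 2 := by
    rw [hnull]
    have : ((n - 2 : ℕ) : ℝ) = (n : ℝ) - 2 := by
      push_cast [Nat.cast_sub hn]
      ring
    rw [this]
  have h2 : (n : ℝ) - (G.nullity : ℝ) = 2 := by rw [hnr]; ring
  rw [hen, hprod, h2, hmr]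
  have habs : |(-c)| = c := by rw [abs_neg, abs_of_pos hc]
  rw [habs]
  rw [show (2 : ℝ) / 2 = 1 by norm_num, Real.rpow_one]
  have : 2 * c + 2 * (2 - 1) * c = (2 * t) ^ 2 := by rw [← ht2]; ring
  rw [this, Real.sqrt_sq (by linarith : (0:ℝ) ≤ 2 * t)]

end CoreMcClelland


section HardMcClelland
open Matrix Finset

variable {n : ℕ}

lemma hard_dir {G : SimpleGraph (Fin n)} [DecidableRel G.Adj] (hconn : G.Connected)
    (hn : 2 ≤ n)
    (heq : G.energy = Real.sqrt (2 * (G.edgeFinset.card : ℝ) +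
      ((n : ℝ) - (G.nullity : ℝ)) * ((n : ℝ) - (G.nullity : ℝ) - 1) *
        |G.prodNonzeroEig| ^ ((2 : ℝ) / ((n : ℝ) - (G.nullity : ℝ))))) :
    ∃ s : Fin n → Bool, ∀ u v, G.Adj u v ↔ s u ≠ s v := by
  classical
  set hA := G.adjMatrix_isHermitian with hhA
  set lam := hA.eigenvalues with hlam
  set S := univ.filter (fun i => lam i ≠ 0) with hSdef
  set Z := univ.filter (fun i => lam i = 0) with hZdef
  have hnullZ : G.nullity = #Z := rfl
  have hZS : #Z + #S = n := by
    have h1 := Finset.card_filter_add_card_filter_not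
      (s := (univ : Finset (Fin n))) (p := fun i => lam i = 0)
    have h2 : (univ.filter (fun i => ¬ lam i = 0)) = S := by
      ext i
      simp [hSdef]
    rw [h2] at h1
    simpa using h1
  have hr_real : (n : ℝ) - (G.nullity : ℝ) = (#S : ℝ) := by
    rw [hnullZ]
    have : (#Z : ℝ) + (#S : ℝ) = (n : ℝ) := by exact_mod_cast hZS
    linarith
  -- trace identities
  have hsum0 : ∑ i, lam i = 0 := by
    have h1 := trace_pow_eq hA 1
    simp only [pow_one] at h1
    rw [← h1, SimpleGraph.trace_adjMatrix]
  have hsum2 : ∑ i, lam i ^ 2 = 2 * (G.edgeFinset.card : ℝ) := by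
    have h1 := trace_pow_eq hA 2
    rw [← h1, trace_sq]
  have hdrop : ∀ f : Fin n → ℝ, (∀ i, lam i = 0 → f i = 0) →
      ∑ i, f i = ∑ i ∈ S, f i := by
    intro f hf
    have h1 := Finset.sum_filter_add_sum_filter_not univ (fun i => lam i = 0) f
    have h2 : (univ.filter (fun i => ¬ lam i = 0)) = S := by
      ext i
      simp [hSdef]
    rw [h2] at h1
    have h3 : ∑ i ∈ univ.filter (fun i => lam i = 0), f i = 0 :=
      Finset.sum_eq_zero fun i hi => hf i (Finset.mem_filter.mp hi).2
    rw [← h1, h3, zero_add]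
  have hmem : ∀ i ∈ S, lam i ≠ 0 := fun i hi => (Finset.mem_filter.mp hi).2
  -- m ≥ 1
  have hm1 : 1 ≤ G.edgeFinset.card := by
    obtain ⟨u, v, huv⟩ := exists_edge hconn hn
    have h1 : 0 < #G.edgeFinset := Finset.card_pos.mpr
      ⟨s(u, v), SimpleGraph.mem_edgeFinset.mpr huv⟩
    omega
  have hm1' : (1 : ℝ) ≤ (G.edgeFinset.card : ℝ) := by exact_mod_cast hm1
  -- S nonempty and card ≥ 2
  have hSne : S.Nonempty := by
    by_contra h
    rw [Finset.not_nonempty_iff_eq_empty] at h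
    have h1 := hdrop (fun i => lam i ^ 2) (fun i hi => by simp [hi])
    rw [h, Finset.sum_empty, hsum2] at h1
    linarith
  have hr2 : 2 ≤ #S := by
    by_contra h
    push_neg at h
    have h1 : #S = 1 := by
      have := Finset.card_pos.mpr hSne
      omega
    obtain ⟨i, hi⟩ := Finset.card_eq_one.mp h1
    have h2 := hdrop (fun i => lam i) (fun i hi => hi)
    rw [hsum0, hi, Finset.sum_singleton] at h2
    exact hmem i (by rw [hi]; exact Finset.mem_singleton_self i) h2.symm
  have hr2' : (2 : ℝ) ≤ (#S : ℝ) := by exact_mod_cast hr2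
  -- abs eigenvalues
  set x : Fin n → ℝ := fun i => |lam i| with hxdef
  have hxpos : ∀ i ∈ S, 0 < x i := fun i hi => abs_pos.mpr (hmem i hi)
  have hE : G.energy = ∑ i ∈ S, x i := by
    have h0 : G.energy = ∑ i, x i := rfl
    rw [h0, hdrop x (fun i hi => by rw [hxdef]; simp [hi])]
  have hprodS : G.prodNonzeroEig = ∏ i ∈ S, lam i := rfl
  have habsprod : |G.prodNonzeroEig| = ∏ i ∈ S, x i := by
    rw [hprodS, Finset.abs_prod]
  -- nonnegativity of the radicand
  set p : ℝ := ∏ i ∈ S, x i with hpdef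
  have hppos : 0 < p := Finset.prod_pos hxpos
  rw [hr_real, habsprod] at heq
  have hT : (0 : ℝ) ≤ 2 * (G.edgeFinset.card : ℝ) +
      (#S : ℝ) * ((#S : ℝ) - 1) * p ^ ((2 : ℝ) / (#S : ℝ)) := by
    have h1 : (0 : ℝ) ≤ p ^ ((2 : ℝ) / (#S : ℝ)) := Real.rpow_nonneg hppos.le _
    have h2 : (0 : ℝ) ≤ (#S : ℝ) * ((#S : ℝ) - 1) * p ^ ((2 : ℝ) / (#S : ℝ)) :=
      mul_nonneg (mul_nonneg (by linarith) (by linarith)) h1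
    linarith
  -- square the equality
  have hE2 : (∑ i ∈ S, x i) ^ 2 = 2 * (G.edgeFinset.card : ℝ) +
      (#S : ℝ) * ((#S : ℝ) - 1) * p ^ ((2 : ℝ) / (#S : ℝ)) := by
    rw [← hE, heq, Real.sq_sqrt hT]
  -- expand the square
  have hexp : (∑ i ∈ S, x i) ^ 2 =
      ∑ i ∈ S, x i ^ 2 + ∑ q ∈ S.offDiag, x q.1 * x q.2 := by
    rw [pow_two, Finset.sum_mul_sum]
    have h1 : ∑ i ∈ S, ∑ j ∈ S, x i * x j = ∑ q ∈ S ×ˢ S, x q.1 * x q.2 := by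
      rw [Finset.sum_product]
    rw [h1, ← Finset.diag_union_offDiag S,
      Finset.sum_union (Finset.disjoint_diag_offDiag S), Finset.sum_diag]
    congr 1
    exact Finset.sum_congr rfl fun i _ => (pow_two (x i)).symm
  have hsq : ∑ i ∈ S, x i ^ 2 = 2 * (G.edgeFinset.card : ℝ) := by
    have h1 : ∑ i ∈ S, x i ^ 2 = ∑ i ∈ S, lam i ^ 2 :=
      Finset.sum_congr rfl fun i _ => by rw [hxdef]; exact sq_abs (lam i)
    rw [h1, ← hdrop (fun i => lam i ^ 2) (fun i hi => by simp [hi]), hsum2]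
  have hoff : ∑ q ∈ S.offDiag, x q.1 * x q.2 =
      (#S : ℝ) * ((#S : ℝ) - 1) * p ^ ((2 : ℝ) / (#S : ℝ)) := by
    have := hE2
    rw [hexp, hsq] at this
    linarith
  -- all |eigenvalues| on S are equal
  have hconst : ∀ i ∈ S, ∀ j ∈ S, x i = x j := by
    by_cases hr3 : 3 ≤ #S
    · exact amgm_const S hr3 x hxpos (by rw [hoff, hpdef])
    · have hcard2 : #S = 2 := by omega
      obtain ⟨i, j, hij, hSij⟩ := Finset.card_eq_two.mp hcard2
      have hsumS : lam i + lam j = 0 := by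
        have h1 := hdrop (fun i => lam i) (fun i hi => hi)
        rw [hsum0, hSij, Finset.sum_pair hij] at h1
        linarith
      have hx_eq : x i = x j := by
        rw [hxdef]
        simp only
        rw [show lam j = -lam i by linarith, abs_neg]
      intro k hk l hl
      rw [hSij, Finset.mem_insert, Finset.mem_singleton] at hk hl
      rcases hk with rfl | rfl <;> rcases hl with rfl | rfl <;>
        first | rfl | exact hx_eq | exact hx_eq.symm
  obtain ⟨i₀, hi₀⟩ := hSne
  set θ := x i₀ with hθdef
  have hθpos : 0 < θ := hxpos i₀ hi₀
  have hval3 : ∀ i, lam i ^ 3 = (θ ^ 2) * lam i := by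
    intro i
    by_cases h : lam i = 0
    · rw [h]; ring
    · have hiS : i ∈ S := by rw [hSdef]; simp [h]
      have h1 : x i = θ := hconst i hiS i₀ hi₀
      have h2 : lam i ^ 2 = θ ^ 2 := by
        rw [← sq_abs]
        rw [show |lam i| = θ from h1]
      linear_combination lam i * h2
  have hcube : (G.adjMatrix ℝ) ^ 3 = (θ ^ 2) • G.adjMatrix ℝ :=
    (cube_eq_smul_iff hA (θ ^ 2)).mpr hval3
  have hθ2 : (θ : ℝ) ^ 2 ≠ 0 := by positivity
  exact exists_bipartition hconn (Hwalk_of_cube hθ2 hcube)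

end HardMcClelland

theorem graph_energy_eq_mcclelland_bound_iff_completeBipartite {n : ℕ}
    (G : SimpleGraph (Fin n)) [DecidableRel G.Adj] (hconn : G.Connected)
    (hn : 2 ≤ n) (m : ℕ) (hm : m = G.edgeFinset.card)
    (κ : ℕ) (hκ : κ = G.nullity) :
    (G.energy =
        Real.sqrt (2 * m +
          ((n : ℝ) - κ) * ((n : ℝ) - κ - 1) *
            |G.prodNonzeroEig| ^ ((2 : ℝ) / ((n : ℝ) - κ))) ↔
      ∃ a b : ℕ, 1 ≤ a ∧ 1 ≤ b ∧ a + b = n ∧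
        Nonempty (G ≃g completeBipartiteGraph (Fin a) (Fin b))) ∧
    (G.energy =
        Real.sqrt (2 * m +
          ((n : ℝ) - κ) * ((n : ℝ) - κ - 1) *
            |G.prodNonzeroEig| ^ ((2 : ℝ) / ((n : ℝ) - κ))) →
      κ = n - 2) := by
  subst hm
  subst hκ
  constructor
  · constructor
    · intro heq
      obtain ⟨s, hAdj⟩ := hard_dir hconn hn heq
      exact iso_exists s hAdj (exists_edge hconn hn)
    · rintro ⟨a, b, ha, hb, hab, ⟨e⟩⟩
      exact (core_bip hconn hn _ (s_of_iso e)).2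
  · intro heq
    obtain ⟨s, hAdj⟩ := hard_dir hconn hn heq
    exact (core_bip hconn hn s hAdj).1
end

section
/- Let R be a nonzero n×n real symmetric matrix with nonnegative entries, with spectral radius ρ (its largest eigenvalue) and nullity κ = η(R). Then E(R) ≥ ρ + (n − κ − 1) + ln|Υ_{n−κ}(R)| − ln ρ. -/
open Finset

lemma trace_eq_sum_eigs {n : ℕ} (R : Matrix (Fin n) (Fin n) ℝ)
    (hR : R.IsHermitian) : R.trace = ∑ i, hR.eigenvalues i := by
  rw [hR.trace_eq_sum_eigenvalues]
  simp

theorem energy_lower_bound_das_mojallal_gutman {n : ℕ}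
    (R : Matrix (Fin n) (Fin n) ℝ) (hR : R.IsHermitian)
    (hnonneg : ∀ i j, 0 ≤ R i j) (hR0 : R ≠ 0)
    (ρ : ℝ) (hρ : IsGreatest (Set.range hR.eigenvalues) ρ)
    (κ : ℕ) (hκ : κ = R.nullityEig hR) :
    R.energy hR ≥
      ρ + ((n : ℝ) - κ - 1) + Real.log |R.prodNonzeroEig hR| - Real.log ρ := by
  obtain ⟨⟨i0, hi0⟩, hub⟩ := hρ
  set ev := hR.eigenvalues with hev
  -- not all eigenvalues are zero
  have hnz : ∃ j, ev j ≠ 0 := by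
    by_contra h
    push_neg at h
    apply hR0
    have := hR.spectral_theorem
    rw [this]
    have : Matrix.diagonal (RCLike.ofReal ∘ ev) = (0 : Matrix (Fin n) (Fin n) ℝ) := by
      ext i j
      by_cases hij : i = j <;>
        simp [Matrix.diagonal, hij, h]
    rw [this]
    simp
  -- ρ > 0
  have hρpos : 0 < ρ := by
    by_contra h
    push_neg at h
    have hle : ∀ i, ev i ≤ 0 := fun i => (hub ⟨i, rfl⟩).trans h
    have htr : 0 ≤ ∑ i, ev i := by
      rw [← trace_eq_sum_eigs R hR]
      exact Finset.sum_nonneg fun i _ => hnonneg i i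
    have hall : ∀ i ∈ Finset.univ, ev i = 0 := by
      intro i _
      have hsum0 : ∑ i, ev i = 0 :=
        le_antisymm (Finset.sum_nonpos fun i _ => hle i) htr
      have := (Finset.sum_eq_zero_iff_of_nonneg
        (fun i _ => neg_nonneg.mpr (hle i))).mp (by simp [hsum0] : ∑ i, -ev i = 0)
      have := this i (Finset.mem_univ i)
      linarith
    obtain ⟨j, hj⟩ := hnz
    exact hj (hall j (Finset.mem_univ j))
  -- setup
  set S := Finset.univ.filter (fun i => ev i ≠ 0) with hS
  have hi0S : i0 ∈ S := by
    simp only [hS, Finset.mem_filter, Finset.mem_univ, true_and]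
    rw [hi0]; exact ne_of_gt hρpos
  have hcard : (S.card : ℝ) = (n : ℝ) - κ := by
    have := Finset.card_filter_add_card_filter_not
      (s := (Finset.univ : Finset (Fin n))) (p := fun i => ev i = 0)
    simp only [Finset.card_univ, Fintype.card_fin] at this
    have hκ' : κ + S.card = n := by
      rw [hκ, Matrix.nullityEig, hS]
      convert this using 3
    push_cast [← hκ']
    ring
  -- energy = sum over S of |ev i|
  have hE : R.energy hR = ∑ i ∈ S, |ev i| := by
    rw [Matrix.energy]
    rw [← Finset.sum_filter_add_sum_filter_not Finset.univ (fun i => ev i ≠ 0)]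
    have : ∑ i ∈ Finset.univ.filter (fun i => ¬ ev i ≠ 0), |ev i| = 0 := by
      apply Finset.sum_eq_zero
      intro i hi
      simp only [Finset.mem_filter, not_not] at hi
      simp [hi.2]
    rw [this, add_zero]
  -- product over S
  have hprod : |R.prodNonzeroEig hR| = ∏ i ∈ S, |ev i| := by
    rw [Matrix.prodNonzeroEig, Finset.abs_prod]
  have habs_pos : ∀ i ∈ S, 0 < |ev i| := by
    intro i hi
    simp only [hS, Finset.mem_filter] at hi
    exact abs_pos.mpr hi.2
  -- split off i0
  have hsplit : ∑ i ∈ S, |ev i| = ρ + ∑ i ∈ S.erase i0, |ev i| := by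
    rw [← Finset.add_sum_erase S _ hi0S, hi0, abs_of_pos hρpos]
  have hlog : ∀ i ∈ S.erase i0, 1 + Real.log |ev i| ≤ |ev i| := by
    intro i hi
    have := Real.log_le_sub_one_of_pos (habs_pos i (Finset.mem_of_mem_erase hi))
    linarith
  have hsum_log : ∑ i ∈ S.erase i0, Real.log |ev i| =
      Real.log |R.prodNonzeroEig hR| - Real.log ρ := by
    rw [hprod, ← Finset.mul_prod_erase S _ hi0S, hi0, abs_of_pos hρpos,
      Real.log_mul (ne_of_gt hρpos)]
    · ring_nf
      rw [Real.log_prod]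
      intro i hi
      exact ne_of_gt (habs_pos i (Finset.mem_of_mem_erase hi))
    · exact ne_of_gt (Finset.prod_pos fun i hi =>
        habs_pos i (Finset.mem_of_mem_erase hi))
  have hcard_erase : ((S.erase i0).card : ℝ) = (n : ℝ) - κ - 1 := by
    have h1 : 1 ≤ S.card := Finset.card_pos.mpr ⟨i0, hi0S⟩
    rw [Finset.card_erase_of_mem hi0S, Nat.cast_sub h1, hcard]
    push_cast
    ring
  have key : ∑ i ∈ S.erase i0, |ev i| ≥
      ((n : ℝ) - κ - 1) + (Real.log |R.prodNonzeroEig hR| - Real.log ρ) := by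
    calc ∑ i ∈ S.erase i0, |ev i| ≥ ∑ i ∈ S.erase i0, (1 + Real.log |ev i|) :=
          Finset.sum_le_sum hlog
      _ = ((S.erase i0).card : ℝ) + ∑ i ∈ S.erase i0, Real.log |ev i| := by
          rw [Finset.sum_add_distrib, Finset.sum_const, nsmul_eq_mul, mul_one]
      _ = ((n : ℝ) - κ - 1) + (Real.log |R.prodNonzeroEig hR| - Real.log ρ) := by
          rw [hcard_erase, hsum_log]
  rw [hE, hsplit]
  linarith
end

section
/- Let R be a nonzero n×n real symmetric matrix with nonnegative entries, with spectral radius ρ (its largest eigenvalue) and nullity κ = η(R). Then E(R) = ρ + (n − κ − 1) + ln|Υ_{n−κ}(R)| − ln ρ holds if and only if, after removing one occurrence of ρ from the list of eigenvalues, every remaining nonzero eigenvalue of R has absolute value 1. -/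
open Finset

theorem energy_eq_das_mojallal_gutman_bound_iff {n : ℕ}
    (R : Matrix (Fin n) (Fin n) ℝ) (hR : R.IsHermitian)
    (hnonneg : ∀ i j, 0 ≤ R i j) (hR0 : R ≠ 0)
    (ρ : ℝ) (hρ : IsGreatest (Set.range hR.eigenvalues) ρ)
    (κ : ℕ) (hκ : κ = R.nullityEig hR) :
    R.energy hR =
      ρ + ((n : ℝ) - κ - 1) + Real.log |R.prodNonzeroEig hR| - Real.log ρ ↔
    ∃ i₀, hR.eigenvalues i₀ = ρ ∧
      ∀ i, i ≠ i₀ → hR.eigenvalues i ≠ 0 → |hR.eigenvalues i| = 1 := by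
  classical
  set μ := hR.eigenvalues with hμ
  set S := Finset.univ.filter (fun i => μ i ≠ 0) with hS
  -- trace equals the sum of eigenvalues
  have htr : R.trace = ∑ i, μ i := by
    conv_lhs => rw [hR.spectral_theorem]
    rw [Unitary.conjStarAlgAut_apply]
    rw [Matrix.trace_mul_comm, ← Matrix.mul_assoc,
      (Matrix.mem_unitaryGroup_iff').mp (hR.eigenvectorUnitary).2, Matrix.one_mul,
      Matrix.trace_diagonal]
    simp
    rfl
  have hρpos : 0 < ρ := by
    by_contra h
    push_neg at h
    have hle : ∀ i, μ i ≤ 0 := fun i => le_trans (hρ.2 ⟨i, rfl⟩) h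
    have hge : 0 ≤ ∑ i, μ i := by
      rw [← htr]
      exact Finset.sum_nonneg fun i _ => hnonneg i i
    have hall : ∀ i ∈ Finset.univ, μ i = 0 := by
      rw [← Finset.sum_eq_zero_iff_of_nonpos fun i _ => hle i]
      exact le_antisymm (Finset.sum_nonpos fun i _ => hle i) hge
    apply hR0
    conv_lhs => rw [hR.spectral_theorem]
    have : (RCLike.ofReal ∘ hR.eigenvalues : Fin n → ℝ) = 0 := by
      funext i; simpa using hall i (Finset.mem_univ i)
    rw [this, show Matrix.diagonal (0 : Fin n → ℝ) = 0 from Matrix.diagonal_zero,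
      map_zero]
  have hcards : S.card + κ = n := by
    rw [hκ]
    have := Finset.card_filter_add_card_filter_not
      (s := (Finset.univ : Finset (Fin n))) (p := fun i => μ i ≠ 0)
    simp only [Finset.card_univ, Fintype.card_fin, not_not] at this
    unfold Matrix.nullityEig
    exact this
  -- key equivalence for any witness of the spectral radius
  have key : ∀ i₀, μ i₀ = ρ →
      (R.energy hR =
        ρ + ((n : ℝ) - κ - 1) + Real.log |R.prodNonzeroEig hR| - Real.log ρ ↔
      ∀ i, i ≠ i₀ → μ i ≠ 0 → |μ i| = 1) := by
    intro i₀ hi₀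
    have hi₀S : i₀ ∈ S := by
      simp [hS, hi₀, ne_of_gt hρpos]
    -- energy as a sum over S
    have hE : R.energy hR = ρ + ∑ i ∈ S.erase i₀, |μ i| := by
      unfold Matrix.energy
      simp only [← hμ]
      rw [← Finset.sum_filter_of_ne (p := fun i => μ i ≠ 0)
        (fun x _ hx => fun h0 => hx (by simp [h0]))]
      rw [← Finset.add_sum_erase _ _ hi₀S, hi₀, abs_of_pos hρpos]
    -- log of product
    have hP : Real.log |R.prodNonzeroEig hR| =
        Real.log ρ + ∑ i ∈ S.erase i₀, Real.log |μ i| := by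
      unfold Matrix.prodNonzeroEig
      simp only [← hμ]
      rw [Real.log_abs, Real.log_prod (fun i hi => (Finset.mem_filter.mp hi).2),
        ← Finset.add_sum_erase _ _ hi₀S, hi₀]
      congr 1
      exact Finset.sum_congr rfl fun i _ => (Real.log_abs (μ i)).symm
    have hcardE : ((S.erase i₀).card : ℝ) = (n : ℝ) - κ - 1 := by
      rw [Finset.card_erase_of_mem hi₀S]
      have h1 : 1 ≤ S.card := Finset.card_pos.mpr ⟨i₀, hi₀S⟩
      have : (S.card : ℝ) = (n : ℝ) - κ := by
        have := hcards
        push_cast [← this]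
        ring
      push_cast [Nat.cast_sub h1]
      rw [this]
    have hident : R.energy hR -
        (ρ + ((n : ℝ) - κ - 1) + Real.log |R.prodNonzeroEig hR| - Real.log ρ) =
        ∑ i ∈ S.erase i₀, (|μ i| - 1 - Real.log |μ i|) := by
      rw [hE, hP, ← hcardE, Finset.sum_sub_distrib, Finset.sum_sub_distrib,
        Finset.sum_const, nsmul_eq_mul, mul_one]
      ring
    have hterm : ∀ i ∈ S.erase i₀, 0 ≤ |μ i| - 1 - Real.log |μ i| := by
      intro i hi
      have hiS := Finset.mem_of_mem_erase hi
      have hpos : 0 < |μ i| := abs_pos.mpr (Finset.mem_filter.mp hiS).2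
      have := Real.log_le_sub_one_of_pos hpos
      linarith
    constructor
    · intro heq i hne h0
      have hiE : i ∈ S.erase i₀ := Finset.mem_erase.mpr ⟨hne, by simp [hS, h0]⟩
      have hsum0 : ∑ i ∈ S.erase i₀, (|μ i| - 1 - Real.log |μ i|) = 0 := by
        rw [← hident, heq]; ring
      have := (Finset.sum_eq_zero_iff_of_nonneg hterm).mp hsum0 i hiE
      by_contra habs
      have hpos : 0 < |μ i| := abs_pos.mpr h0
      have := Real.log_lt_sub_one_of_pos hpos habs
      linarith [(Finset.sum_eq_zero_iff_of_nonneg hterm).mp hsum0 i hiE]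
    · intro hall
      have hsum0 : ∑ i ∈ S.erase i₀, (|μ i| - 1 - Real.log |μ i|) = 0 := by
        apply Finset.sum_eq_zero
        intro i hi
        have h1 := hall i (Finset.mem_erase.mp hi).1
          (Finset.mem_filter.mp (Finset.mem_of_mem_erase hi)).2
        rw [h1]
        simp
      have := hident
      rw [hsum0, sub_eq_zero] at this
      exact this
  constructor
  · intro heq
    obtain ⟨i₀, hi₀⟩ := hρ.1
    exact ⟨i₀, hi₀, (key i₀ hi₀).mp heq⟩
  · rintro ⟨i₀, h1, h2⟩
    exact (key i₀ h1).mpr h2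
end

section
/- Let R be a nonzero n×n real symmetric matrix with nonnegative entries, with spectral radius ρ (its largest eigenvalue) and nullity κ = η(R). Suppose there exist three distinct indices i, j, k such that R has zero diagonal entries at i, j, k, R[i,k] = 0, and, setting a = R[i,j] and b = R[j,k], one has a² + b² > 1. Then the inequality is strict: E(R) > ρ + (n − κ − 1) + ln|Υ_{n−κ}(R)| − ln ρ. -/
open Finset
open Matrix

lemma quad_decomp {n : ℕ} (A : Matrix (Fin n) (Fin n) ℝ) (hA : A.IsHermitian) (v : Fin n → ℝ) :
    ∃ w : Fin n → ℝ, (∑ p, w p ^ 2 = ∑ p, v p ^ 2) ∧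
      dotProduct v (A *ᵥ v) = ∑ p, hA.eigenvalues p * w p ^ 2 := by
  classical
  set U : Matrix (Fin n) (Fin n) ℝ := (hA.eigenvectorUnitary : Matrix (Fin n) (Fin n) ℝ) with hUdef
  have hU1 : U * star U = 1 := Matrix.mem_unitaryGroup_iff.mp hA.eigenvectorUnitary.2
  refine ⟨star U *ᵥ v, ?_, ?_⟩
  · have key : (star U *ᵥ v) = v ᵥ* U := by
      rw [Matrix.star_eq_conjTranspose, Matrix.conjTranspose_eq_transpose_of_trivial,
        Matrix.mulVec_transpose]
    have h1 : dotProduct (star U *ᵥ v) (star U *ᵥ v) = dotProduct v v := by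
      rw [key, ← Matrix.dotProduct_mulVec, ← key, Matrix.mulVec_mulVec, hU1, Matrix.one_mulVec]
    simpa [dotProduct, pow_two] using h1
  · have key : (star U *ᵥ v) = v ᵥ* U := by
      rw [Matrix.star_eq_conjTranspose, Matrix.conjTranspose_eq_transpose_of_trivial,
        Matrix.mulVec_transpose]
    set D : Matrix (Fin n) (Fin n) ℝ := Matrix.diagonal (RCLike.ofReal ∘ hA.eigenvalues) with hD
    have hspec : A = U * D * star U := hA.spectral_theorem
    calc dotProduct v (A *ᵥ v)
        = dotProduct v (U *ᵥ (D *ᵥ (star U *ᵥ v))) := by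
          rw [hspec, Matrix.mulVec_mulVec, Matrix.mulVec_mulVec]
      _ = dotProduct (v ᵥ* U) (D *ᵥ (star U *ᵥ v)) := Matrix.dotProduct_mulVec _ _ _
      _ = ∑ p, hA.eigenvalues p * (star U *ᵥ v) p ^ 2 := by
          rw [← key]
          simp only [dotProduct, hD, Matrix.mulVec_diagonal]
          refine Finset.sum_congr rfl fun p _ => ?_
          simp [RCLike.ofReal_real_eq_id]
          ring

lemma exists_eigenvalue_le_rayleigh {n : ℕ} (A : Matrix (Fin n) (Fin n) ℝ)
    (hA : A.IsHermitian) (v : Fin n → ℝ) (hv : 0 < ∑ p, v p ^ 2) (c : ℝ)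
    (hq : dotProduct v (A *ᵥ v) ≤ c * ∑ p, v p ^ 2) :
    ∃ p, hA.eigenvalues p ≤ c := by
  by_contra hcon
  push_neg at hcon
  obtain ⟨w, hnorm, hquad⟩ := quad_decomp A hA v
  have hex : ∃ p : Fin n, w p ≠ 0 := by
    by_contra hw
    push_neg at hw
    rw [← hnorm] at hv
    simp [hw] at hv
  obtain ⟨p₀, hp₀⟩ := hex
  have hlt : ∑ p, c * w p ^ 2 < ∑ p, hA.eigenvalues p * w p ^ 2 := by
    refine Finset.sum_lt_sum (fun p _ => ?_) ⟨p₀, Finset.mem_univ _, ?_⟩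
    · exact mul_le_mul_of_nonneg_right (hcon p).le (sq_nonneg _)
    · exact mul_lt_mul_of_pos_right (hcon p₀) (pow_pos (abs_pos.mpr hp₀) 2 |> fun h => by
        simpa [sq_abs] using h)
  have : c * ∑ p, v p ^ 2 < dotProduct v (A *ᵥ v) := by
    rw [hquad, ← hnorm, Finset.mul_sum]
    exact hlt
  linarith



lemma sum_eigenvalues_eq_trace' {n : ℕ} (A : Matrix (Fin n) (Fin n) ℝ) (hA : A.IsHermitian) :
    ∑ p, hA.eigenvalues p = ∑ p, A p p := by
  classical
  have h : Matrix.trace A = Matrix.trace (Matrix.diagonal (RCLike.ofReal ∘ hA.eigenvalues)) := by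
    conv_lhs => rw [hA.spectral_theorem]
    rw [Unitary.conjStarAlgAut_apply, Matrix.trace_mul_cycle, Matrix.mem_unitaryGroup_iff'.mp hA.eigenvectorUnitary.2, one_mul]
  have h2 : Matrix.trace A = ∑ p, A p p := rfl
  rw [h2] at h
  rw [h, Matrix.trace_diagonal]
  simp [RCLike.ofReal_real_eq_id]

theorem energy_strict_lower_bound_of_path_submatrix {n : ℕ}
    (R : Matrix (Fin n) (Fin n) ℝ) (hR : R.IsHermitian)
    (hnonneg : ∀ i j, 0 ≤ R i j) (hR0 : R ≠ 0)
    (ρ : ℝ) (hρ : IsGreatest (Set.range hR.eigenvalues) ρ)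
    (κ : ℕ) (hκ : κ = R.nullityEig hR)
    (i j k : Fin n) (hij : i ≠ j) (hjk : j ≠ k) (hik : i ≠ k)
    (hii : R i i = 0) (hjj : R j j = 0) (hkk : R k k = 0)
    (hik0 : R i k = 0)
    (hab : (R i j) ^ 2 + (R j k) ^ 2 > 1) :
    R.energy hR >
      ρ + ((n : ℝ) - κ - 1) + Real.log |R.prodNonzeroEig hR| - Real.log ρ := by
  classical
  set ev : Fin n → ℝ := hR.eigenvalues with hev
  set a : ℝ := R i j with ha
  set b : ℝ := R j k with hb
  set s : ℝ := Real.sqrt (a ^ 2 + b ^ 2) with hsdef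
  have hs0 : 0 ≤ s := Real.sqrt_nonneg _
  have hs2 : s ^ 2 = a ^ 2 + b ^ 2 := Real.sq_sqrt (by positivity)
  have hs1 : 1 < s := by nlinarith
  have hsym : ∀ p q, R q p = R p q := fun p q => by
    have := hR.apply p q
    simpa using this
  -- the test vector
  set v : Fin n → ℝ :=
    fun p => if p = i then a else if p = j then -s else if p = k then b else 0 with hvdef
  have hvi : v i = a := by simp [hvdef]
  have hvj : v j = -s := by simp [hvdef, (Ne.symm hij)]
  have hvk : v k = b := by simp [hvdef, (Ne.symm hik), (Ne.symm hjk)]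
  have hvz : ∀ p, p ≠ i → p ≠ j → p ≠ k → v p = 0 := by
    intro p h1 h2 h3; simp [hvdef, h1, h2, h3]
  have hsum3 : ∀ f : Fin n → ℝ, (∀ p, p ≠ i → p ≠ j → p ≠ k → f p = 0) →
      ∑ p, f p = f i + f j + f k := by
    intro f hf
    have h1 : ∑ p, f p = ∑ p ∈ ({i, j, k} : Finset (Fin n)), f p := by
      refine (Finset.sum_subset (Finset.subset_univ _) (fun x _ hx => ?_)).symm
      simp only [Finset.mem_insert, Finset.mem_singleton, not_or] at hx
      exact hf x hx.1 hx.2.1 hx.2.2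
    rw [h1, Finset.sum_insert (by simp [hij, hik]),
      Finset.sum_insert (by simp [hjk]), Finset.sum_singleton]
    ring
  have hnormv : ∑ p, v p ^ 2 = 2 * s ^ 2 := by
    rw [hsum3 (fun p => v p ^ 2) (fun p h1 h2 h3 => by simp [hvz p h1 h2 h3]),
      hvi, hvj, hvk]
    nlinarith
  have hquadv : dotProduct v (R *ᵥ v) = -s * (2 * s ^ 2) := by
    have hRv : ∀ p, (R *ᵥ v) p = R p i * a + R p j * (-s) + R p k * b := by
      intro p
      show ∑ q, R p q * v q = _
      rw [hsum3 (fun q => R p q * v q) (fun q h1 h2 h3 => by simp [hvz q h1 h2 h3]),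
        hvi, hvj, hvk]
    have hji : R j i = a := hsym i j
    have hki : R k i = 0 := by rw [hsym i k]; exact hik0
    have hkj : R k j = b := hsym j k
    show ∑ p, v p * (R *ᵥ v) p = _
    rw [hsum3 (fun p => v p * (R *ᵥ v) p) (fun p h1 h2 h3 => by simp [hvz p h1 h2 h3]),
      hvi, hvj, hvk, hRv i, hRv j, hRv k, hii, hjj, hkk, hik0, hji, hki, hkj]
    linear_combination (2 * s) * hs2
  have hvpos : 0 < ∑ p, v p ^ 2 := by rw [hnormv]; nlinarith
  obtain ⟨m, hm⟩ : ∃ p, ev p ≤ -s := by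
    refine exists_eigenvalue_le_rayleigh R hR v hvpos (-s) ?_
    rw [hnormv, hquadv]
  -- positivity of ρ
  have htr : ∑ p, ev p = ∑ p, R p p := sum_eigenvalues_eq_trace' R hR
  have htrnn : 0 ≤ ∑ p, R p p := Finset.sum_nonneg fun p _ => hnonneg p p
  have hρpos : 0 < ρ := by
    by_contra hc
    push_neg at hc
    have hall : ∀ p, ev p ≤ 0 := fun p => le_trans (hρ.2 ⟨p, rfl⟩) hc
    have hrest : ∑ p ∈ Finset.univ.erase m, ev p ≤ 0 :=
      Finset.sum_nonpos fun p _ => hall p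
    have hsplit : ev m + ∑ p ∈ Finset.univ.erase m, ev p = ∑ p, ev p :=
      Finset.add_sum_erase _ ev (Finset.mem_univ m)
    rw [htr] at hsplit
    linarith
  obtain ⟨i₀, hi₀⟩ := hρ.1
  set S : Finset (Fin n) := Finset.univ.filter (fun p => ev p ≠ 0) with hS
  have hiS : i₀ ∈ S := Finset.mem_filter.mpr ⟨Finset.mem_univ _, by rw [hi₀]; exact ne_of_gt hρpos⟩
  have hmneg : ev m < 0 := lt_of_le_of_lt hm (by linarith)
  have hmS : m ∈ S := Finset.mem_filter.mpr ⟨Finset.mem_univ _, ne_of_lt hmneg⟩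
  have hmi : m ≠ i₀ := fun h => by rw [h, hi₀] at hmneg; linarith
  have hmE : m ∈ S.erase i₀ := Finset.mem_erase.mpr ⟨hmi, hmS⟩
  -- cardinalities
  have hcard : S.card + κ = n := by
    rw [hκ]
    have h1 : (Finset.univ.filter fun p => ¬ev p ≠ 0) =
        (Finset.univ.filter fun p => hR.eigenvalues p = 0) := by
      simp [hev, not_not]
    have h2 := Finset.card_filter_add_card_filter_not
      (s := (Finset.univ : Finset (Fin n))) (p := fun p => ev p ≠ 0)
    rw [h1] at h2
    unfold Matrix.nullityEig
    simpa using h2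
  have hcardR : (S.card : ℝ) = (n : ℝ) - κ := by
    have := congrArg (Nat.cast : ℕ → ℝ) hcard
    push_cast at this
    linarith
  have hScard1 : 1 ≤ S.card := Finset.card_pos.mpr ⟨i₀, hiS⟩
  have hcardE : ((S.erase i₀).card : ℝ) = (n : ℝ) - κ - 1 := by
    rw [Finset.card_erase_of_mem hiS, Nat.cast_sub hScard1, hcardR]
    push_cast
    ring
  have habs : ∀ p ∈ S, 0 < |ev p| := fun p hp => abs_pos.mpr (Finset.mem_filter.mp hp).2
  -- energy rewriting
  have hE : R.energy hR = ρ + ∑ p ∈ S.erase i₀, |ev p| := by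
    have h0 : R.energy hR = ∑ p ∈ S, |ev p| :=
      (Finset.sum_filter_of_ne (p := fun p => ev p ≠ 0)
        (fun x _ h he => h (abs_eq_zero.mpr he))).symm
    rw [h0, ← Finset.add_sum_erase S (fun p => |ev p|) hiS, hi₀, abs_of_pos hρpos]
  -- log of the product of nonzero eigenvalues
  have hlogprod : Real.log |R.prodNonzeroEig hR| =
      Real.log ρ + ∑ p ∈ S.erase i₀, Real.log |ev p| := by
    have h0 : R.prodNonzeroEig hR = ∏ p ∈ S, ev p := rfl
    rw [h0, Finset.abs_prod, Real.log_prod (fun p hp => ne_of_gt (habs p hp)),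
      ← Finset.add_sum_erase S (fun p => Real.log |ev p|) hiS, hi₀, abs_of_pos hρpos]
  -- the strict inequality term by term
  have hstrict : ∑ p ∈ S.erase i₀, (1 + Real.log |ev p|) < ∑ p ∈ S.erase i₀, |ev p| := by
    refine Finset.sum_lt_sum (fun p hp => ?_) ⟨m, hmE, ?_⟩
    · have := Real.log_le_sub_one_of_pos (habs p (Finset.mem_of_mem_erase hp))
      linarith
    · have h1 : (1 : ℝ) < |ev m| := by
        have hsle : s ≤ |ev m| := by rw [abs_of_neg hmneg]; linarith
        linarith
      have := Real.log_lt_sub_one_of_pos (habs m hmS) (ne_of_gt h1)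
      linarith
  have hsplit2 : ∑ p ∈ S.erase i₀, (1 + Real.log |ev p|) =
      ((S.erase i₀).card : ℝ) + ∑ p ∈ S.erase i₀, Real.log |ev p| := by
    rw [Finset.sum_add_distrib, Finset.sum_const, nsmul_eq_mul, mul_one]
  rw [hsplit2, hcardE] at hstrict
  rw [hE, hlogprod]
  linarith
end

section
/- Let G be a finite simple graph with n vertices having at least one edge, with largest eigenvalue λ1 and nullity κ = η(G). Then E(G) ≥ λ1 + (n − κ − 1) + ln|Υ_{n−κ}(G)| − ln λ1. -/
open Finset

theorem graph_energy_lower_bound_das_mojallal_gutman {n : ℕ}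
    (G : SimpleGraph (Fin n)) [DecidableRel G.Adj]
    (hedge : ∃ u v, G.Adj u v)
    (lam1 : ℝ) (hlam1 : IsGreatest (Set.range (G.adjMatrix_isHermitian).eigenvalues) lam1)
    (κ : ℕ) (hκ : κ = G.nullity) :
    G.energy ≥
      lam1 + ((n : ℝ) - κ - 1) + Real.log |G.prodNonzeroEig| - Real.log lam1 := by
  classical
  have hA := G.adjMatrix_isHermitian
  set μ : Fin n → ℝ := (G.adjMatrix_isHermitian).eigenvalues with hμdef
  obtain ⟨i0, hi0⟩ := hlam1.1
  -- the sum of eigenvalues is the trace, which is zero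
  have htr : ∑ i, μ i = 0 := by
    have hs := (G.adjMatrix_isHermitian).spectral_theorem
    set U := (Matrix.IsHermitian.eigenvectorUnitary (G.adjMatrix_isHermitian) :
      Matrix (Fin n) (Fin n) ℝ) with hU
    have hUU : star U * U = 1 :=
      (Matrix.mem_unitaryGroup_iff').mp
        (Matrix.IsHermitian.eigenvectorUnitary (G.adjMatrix_isHermitian)).2
    have h1 : (G.adjMatrix ℝ).trace =
        (Matrix.diagonal (RCLike.ofReal ∘ μ)).trace := by
      calc (G.adjMatrix ℝ).trace
          = (U * Matrix.diagonal (RCLike.ofReal ∘ μ) * star U).trace := by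
            exact congrArg Matrix.trace hs
        _ = (star U * (U * Matrix.diagonal (RCLike.ofReal ∘ μ))).trace := by
            rw [Matrix.trace_mul_comm]
        _ = ((star U * U) * Matrix.diagonal (RCLike.ofReal ∘ μ)).trace := by
            rw [mul_assoc]
        _ = (Matrix.diagonal (RCLike.ofReal ∘ μ)).trace := by
            rw [hUU, one_mul]
    rw [SimpleGraph.trace_adjMatrix] at h1
    have h2 : (Matrix.diagonal (RCLike.ofReal ∘ μ)).trace = ∑ i, μ i := by
      simp [Matrix.trace_diagonal]
    rw [h2] at h1
    exact h1.symm
  -- there is a nonzero eigenvalue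
  have hex : ∃ j, μ j ≠ 0 := by
    by_contra h
    push_neg at h
    have hzero : μ = 0 := funext h
    have hs := (G.adjMatrix_isHermitian).spectral_theorem
    rw [← hμdef, hzero] at hs
    have hA0 : G.adjMatrix ℝ = 0 := by
      have hd : Matrix.diagonal (RCLike.ofReal ∘ (0 : Fin n → ℝ)) = (0 : Matrix (Fin n) (Fin n) ℝ) := by
        ext i j
        simp [Matrix.diagonal]
      rw [hd, map_zero] at hs
      exact hs
    obtain ⟨u, v, huv⟩ := hedge
    have h1 : (G.adjMatrix ℝ) u v = 1 := by simp [huv]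
    rw [hA0] at h1
    simp at h1
  -- the largest eigenvalue is positive
  have hlampos : 0 < lam1 := by
    by_contra h
    push_neg at h
    have hall : ∀ i ∈ Finset.univ, μ i ≤ 0 := fun i _ =>
      le_trans (hlam1.2 ⟨i, rfl⟩) h
    obtain ⟨j, hj⟩ := hex
    exact hj ((Finset.sum_eq_zero_iff_of_nonpos hall).mp htr j (Finset.mem_univ j))
  -- the support of the eigenvalues
  set S : Finset (Fin n) := Finset.univ.filter (fun i => μ i ≠ 0) with hS
  have hi0S : i0 ∈ S := by
    simp only [hS, Finset.mem_filter, Finset.mem_univ, true_and]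
    rw [hi0]; exact ne_of_gt hlampos
  have hScard : κ + S.card = n := by
    have := Finset.card_filter_add_card_filter_not
      (s := (Finset.univ : Finset (Fin n))) (p := fun i => μ i = 0)
    simpa [hκ, SimpleGraph.nullity, hS, ← hμdef] using this
  have hcardS1 : 1 ≤ S.card := Finset.card_pos.mpr ⟨i0, hi0S⟩
  -- pointwise bound on S.erase i0
  have hpt : ∀ i ∈ S.erase i0, 1 + Real.log |μ i| ≤ |μ i| := by
    intro i hi
    have hne : μ i ≠ 0 := by
      have := Finset.mem_of_mem_erase hi
      simpa [hS] using this
    have hpos : 0 < |μ i| := abs_pos.mpr hne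
    have := Real.log_le_sub_one_of_pos hpos
    linarith
  have hsum1 : ∑ i ∈ S.erase i0, (1 + Real.log |μ i|) ≤ ∑ i ∈ S.erase i0, |μ i| :=
    Finset.sum_le_sum hpt
  have herasene : ∀ i ∈ S.erase i0, |μ i| ≠ 0 := by
    intro i hi
    have hne : μ i ≠ 0 := by
      have := Finset.mem_of_mem_erase hi
      simpa [hS] using this
    exact abs_ne_zero.mpr hne
  have hlogprod : ∑ i ∈ S.erase i0, Real.log |μ i| =
      Real.log (∏ i ∈ S.erase i0, |μ i|) :=
    (Real.log_prod herasene).symm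
  have hprodsplit : |μ i0| * ∏ i ∈ S.erase i0, |μ i| = ∏ i ∈ S, |μ i| :=
    Finset.mul_prod_erase S (fun i => |μ i|) hi0S
  have habsne : |μ i0| ≠ 0 := by
    rw [hi0]; exact ne_of_gt (abs_pos.mpr (ne_of_gt hlampos))
  have hprodval : ∏ i ∈ S.erase i0, |μ i| = |G.prodNonzeroEig| / |μ i0| := by
    have habs : |G.prodNonzeroEig| = ∏ i ∈ S, |μ i| := by
      rw [SimpleGraph.prodNonzeroEig, Finset.abs_prod]
    rw [habs, ← hprodsplit]
    field_simp
  have hlogerase : Real.log (∏ i ∈ S.erase i0, |μ i|) =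
      Real.log |G.prodNonzeroEig| - Real.log lam1 := by
    rw [hprodval, Real.log_div (by
      intro h0
      rw [SimpleGraph.prodNonzeroEig] at h0
      rw [abs_eq_zero] at h0
      obtain ⟨j, hjS, hj0⟩ := Finset.prod_eq_zero_iff.mp h0
      exact (by simpa [hS] using hjS : μ j ≠ 0) hj0) habsne]
    rw [hi0, abs_of_pos hlampos]
  have hcarderase : (S.erase i0).card = S.card - 1 := Finset.card_erase_of_mem hi0S
  have hsumconst : ∑ i ∈ S.erase i0, (1 + Real.log |μ i|) =
      ((S.card : ℝ) - 1) + (Real.log |G.prodNonzeroEig| - Real.log lam1) := by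
    rw [Finset.sum_add_distrib, Finset.sum_const, hlogprod, hlogerase, hcarderase,
      nsmul_eq_mul, mul_one, Nat.cast_sub hcardS1, Nat.cast_one]
  -- energy bounds
  have henergy : ∑ i ∈ S, |μ i| ≤ G.energy := by
    apply Finset.sum_le_sum_of_subset_of_nonneg (Finset.subset_univ S)
    intro i _ _
    exact abs_nonneg _
  have hsplit : ∑ i ∈ S, |μ i| = |μ i0| + ∑ i ∈ S.erase i0, |μ i| :=
    (Finset.add_sum_erase S _ hi0S).symm
  have hcardreal : (n : ℝ) - κ - 1 = (S.card : ℝ) - 1 := by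
    have : (κ : ℝ) + (S.card : ℝ) = (n : ℝ) := by
      exact_mod_cast congrArg (Nat.cast : ℕ → ℝ) hScard
    linarith
  have habsi0 : |μ i0| = lam1 := by rw [hi0, abs_of_pos hlampos]
  rw [ge_iff_le, hcardreal]
  calc lam1 + ((S.card : ℝ) - 1) + Real.log |G.prodNonzeroEig| - Real.log lam1
      = |μ i0| + (((S.card : ℝ) - 1) + (Real.log |G.prodNonzeroEig| - Real.log lam1)) := by
        rw [habsi0]; ring
    _ = |μ i0| + ∑ i ∈ S.erase i0, (1 + Real.log |μ i|) := by rw [hsumconst]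
    _ ≤ |μ i0| + ∑ i ∈ S.erase i0, |μ i| := by linarith
    _ = ∑ i ∈ S, |μ i| := hsplit.symm
    _ ≤ G.energy := henergy
end

section
/- Let R be an n×n real symmetric matrix with nonnegative entries and nullity κ = η(R), and suppose there exists a nonzero vector x with nonnegative entries such that μ := (xᵀRx)/(xᵀx) ≥ 1. Then E(R) ≥ μ + (n − κ − 1) + ln|Υ_{n−κ}(R)| − ln μ. -/
open Finset

open scoped Matrix in
/-- Rayleigh quotient is at most some eigenvalue. -/
lemma rayleigh_aux {n : ℕ} (R : Matrix (Fin n) (Fin n) ℝ) (hR : R.IsHermitian)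
    (x : Fin n → ℝ) (hx0 : x ≠ 0) (i0 : Fin n)
    (hmax : ∀ i, hR.eigenvalues i ≤ hR.eigenvalues i0) :
    (x ⬝ᵥ (R *ᵥ x)) / (x ⬝ᵥ x) ≤ hR.eigenvalues i0 := by
  set U : Matrix (Fin n) (Fin n) ℝ := (hR.eigenvectorUnitary : Matrix (Fin n) (Fin n) ℝ) with hU
  have hstar : star U = Uᵀ := by
    ext i j; simp [Matrix.star_apply]
  set c : Fin n → ℝ := Uᵀ *ᵥ x with hc
  have hxx : x ⬝ᵥ x = ∑ i, c i ^ 2 := by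
    have h1 : U * star U = 1 := Matrix.mem_unitaryGroup_iff.mp hR.eigenvectorUnitary.2
    have h2 : (∑ i, c i ^ 2) = c ⬝ᵥ c := by simp [dotProduct, sq]
    rw [h2, hc]
    have h3 : (Uᵀ *ᵥ x) ⬝ᵥ (Uᵀ *ᵥ x) = x ⬝ᵥ ((U * Uᵀ) *ᵥ x) := by
      rw [← Matrix.mulVec_mulVec, Matrix.dotProduct_mulVec, Matrix.vecMul_transpose,
        dotProduct_comm]
    rw [h3, ← hstar, h1, Matrix.one_mulVec]
  have hRxx : x ⬝ᵥ (R *ᵥ x) = ∑ i, hR.eigenvalues i * c i ^ 2 := by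
    conv_lhs => rw [hR.spectral_theorem]
    simp only [Unitary.conjStarAlgAut_apply, Unitary.coe_star]
    rw [← hU]
    rw [hstar, ← Matrix.mulVec_mulVec, ← Matrix.mulVec_mulVec, Matrix.dotProduct_mulVec,
      ← Matrix.mulVec_transpose]
    rw [← hc]
    simp only [Matrix.mulVec_diagonal, dotProduct, Function.comp_apply,
      RCLike.ofReal_real_eq_id, id_eq]
    exact Finset.sum_congr rfl fun i _ => by ring
  have hxxpos : 0 < x ⬝ᵥ x := by
    have : x ⬝ᵥ x = ∑ i, x i ^ 2 := by simp [dotProduct, sq]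
    rw [this]
    have : ∃ j, x j ≠ 0 := by
      by_contra h
      push_neg at h
      exact hx0 (funext h)
    obtain ⟨j, hj⟩ := this
    exact Finset.sum_pos' (fun i _ => sq_nonneg _) ⟨j, Finset.mem_univ j, by positivity⟩
  rw [div_le_iff₀ hxxpos, hRxx, hxx, Finset.mul_sum]
  exact Finset.sum_le_sum fun i _ => by nlinarith [sq_nonneg (c i), hmax i]


open scoped Matrix in
theorem energy_lower_bound_rayleigh {n : ℕ}
    (R : Matrix (Fin n) (Fin n) ℝ) (hR : R.IsHermitian)
    (hnonneg : ∀ i j, 0 ≤ R i j)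
    (κ : ℕ) (hκ : κ = R.nullityEig hR)
    (x : Fin n → ℝ) (hx0 : x ≠ 0) (hxnn : ∀ i, 0 ≤ x i)
    (μ : ℝ) (hμdef : μ = (x ⬝ᵥ (R *ᵥ x)) / (x ⬝ᵥ x)) (hμ : 1 ≤ μ) :
    R.energy hR ≥
      μ + ((n : ℝ) - κ - 1) + Real.log |R.prodNonzeroEig hR| - Real.log μ := by
  have hn : n ≠ 0 := by
    rintro rfl
    exact hx0 (funext fun i => i.elim0)
  haveI : Nonempty (Fin n) := ⟨⟨0, Nat.pos_of_ne_zero hn⟩⟩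
  set f := hR.eigenvalues with hf
  obtain ⟨i0, -, hmax⟩ := Finset.exists_max_image Finset.univ f ⟨_, Finset.mem_univ (Classical.arbitrary (Fin n))⟩
  have hmax' : ∀ i, f i ≤ f i0 := fun i => hmax i (Finset.mem_univ i)
  have hμle : μ ≤ f i0 := hμdef ▸ rayleigh_aux R hR x hx0 i0 hmax'
  have hfi0 : 1 ≤ f i0 := le_trans hμ hμle
  have hfi0pos : 0 < f i0 := lt_of_lt_of_le one_pos hfi0
  set S := Finset.univ.filter (fun i => f i ≠ 0) with hS
  have hi0S : i0 ∈ S := Finset.mem_filter.mpr ⟨Finset.mem_univ _, ne_of_gt hfi0pos⟩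
  -- energy equals sum over S
  have hE : R.energy hR = ∑ i ∈ S, |f i| := by
    rw [Matrix.energy, hS]
    rw [Finset.sum_filter_of_ne]
    intro i _ h
    exact fun h0 => h (by rw [h0, abs_zero])
  -- cardinalities
  have hcard : (S.card : ℝ) = (n : ℝ) - κ := by
    have := Finset.card_filter_add_card_filter_not (s := (Finset.univ : Finset (Fin n)))
      (p := fun i => f i = 0)
    simp only [Finset.card_univ, Fintype.card_fin] at this
    have hZ : κ = (Finset.univ.filter fun i => f i = 0).card := hκ
    have hSalt : S = Finset.univ.filter (fun i => ¬ f i = 0) := rfl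
    rw [hSalt]
    have hsum : (Finset.univ.filter fun i => f i = 0).card
        + (Finset.univ.filter fun i => ¬ f i = 0).card = n := this
    have : (Finset.univ.filter fun i => ¬ f i = 0).card = n - κ := by omega
    rw [this]
    have hκn : κ ≤ n := by omega
    push_cast [Nat.cast_sub hκn]
    ring
  have hScard1 : 1 ≤ S.card := Finset.card_pos.mpr ⟨i0, hi0S⟩
  -- split off i0
  have hsplit : ∑ i ∈ S, |f i| = |f i0| + ∑ i ∈ S.erase i0, |f i| :=
    (Finset.add_sum_erase S (fun i => |f i|) hi0S).symm
  -- lower bound tail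
  have htail : ∑ i ∈ S.erase i0, |f i| ≥ ∑ i ∈ S.erase i0, (1 + Real.log |f i|) := by
    apply Finset.sum_le_sum
    intro i hi
    have hfi : f i ≠ 0 := (Finset.mem_filter.mp (Finset.mem_of_mem_erase hi)).2
    have : 0 < |f i| := abs_pos.mpr hfi
    linarith [Real.log_le_sub_one_of_pos this]
  have hlogsum : ∑ i ∈ S.erase i0, Real.log |f i|
      = Real.log |R.prodNonzeroEig hR| - Real.log (f i0) := by
    have h1 : ∑ i ∈ S.erase i0, Real.log |f i|
        = (∑ i ∈ S, Real.log |f i|) - Real.log |f i0| :=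
      Finset.sum_erase_eq_sub hi0S
    have h2 : ∑ i ∈ S, Real.log |f i| = Real.log (∏ i ∈ S, |f i|) := by
      rw [Real.log_prod]
      intro i hi
      exact abs_ne_zero.mpr (Finset.mem_filter.mp hi).2
    have h3 : ∏ i ∈ S, |f i| = |R.prodNonzeroEig hR| := by
      rw [Matrix.prodNonzeroEig, Finset.abs_prod]
    rw [h1, h2, h3, abs_of_pos hfi0pos]
  have hcount : ∑ i ∈ S.erase i0, (1 : ℝ) = (n : ℝ) - κ - 1 := by
    rw [Finset.sum_const, nsmul_eq_mul, mul_one, Finset.card_erase_of_mem hi0S,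
      Nat.cast_sub hScard1, hcard, Nat.cast_one]
  -- monotonicity of t - log t
  have hmono : μ - Real.log μ ≤ f i0 - Real.log (f i0) := by
    have hμpos : 0 < μ := lt_of_lt_of_le one_pos hμ
    have h1 : Real.log (f i0 / μ) ≤ f i0 / μ - 1 :=
      Real.log_le_sub_one_of_pos (by positivity)
    rw [Real.log_div (ne_of_gt hfi0pos) (ne_of_gt hμpos)] at h1
    have h2 : f i0 / μ - 1 ≤ f i0 - μ := by
      rw [div_sub' (ne_of_gt hμpos)]
      rw [div_le_iff₀ hμpos]
      nlinarith
    linarith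
  -- assemble
  rw [hE, hsplit, abs_of_pos hfi0pos]
  have : ∑ i ∈ S.erase i0, (1 + Real.log |f i|)
      = ((n : ℝ) - κ - 1) + (Real.log |R.prodNonzeroEig hR| - Real.log (f i0)) := by
    rw [Finset.sum_add_distrib, hcount, hlogsum]
  linarith [htail, this ▸ htail]
end

section
/- Let R be an n×n real symmetric matrix with nonnegative entries, with largest eigenvalue ρ and nullity κ = η(R), and suppose there exists a nonzero vector x with nonnegative entries such that μ := (xᵀRx)/(xᵀx) ≥ 1. Then E(R) = μ + (n − κ − 1) + ln|Υ_{n−κ}(R)| − ln μ holds if and only if x is an eigenvector of R associated with ρ and, after removing one occurrence of ρ from the list of eigenvalues, every remaining nonzero eigenvalue of R has absolute value 1. -/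
open Finset

private lemma myD_nonneg {μ ρ : ℝ} (hμ : 1 ≤ μ) (hμρ : μ ≤ ρ) :
    0 ≤ (ρ - Real.log ρ) - (μ - Real.log μ) := by
  have hμ0 : (0:ℝ) < μ := by linarith
  have hρ0 : (0:ℝ) < ρ := by linarith
  have hlog : Real.log (ρ / μ) ≤ ρ / μ - 1 :=
    Real.log_le_sub_one_of_pos (by positivity)
  have hdiv : ρ / μ ≤ ρ - μ + 1 := by
    rw [div_le_iff₀ hμ0]; nlinarith
  have := Real.log_div hρ0.ne' hμ0.ne'
  linarith

private lemma myD_eq_zero {μ ρ : ℝ} (hμ : 1 ≤ μ) (hμρ : μ ≤ ρ)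
    (h : (ρ - Real.log ρ) - (μ - Real.log μ) = 0) : μ = ρ := by
  by_contra hne
  have hlt : μ < ρ := lt_of_le_of_ne hμρ hne
  have hμ0 : (0:ℝ) < μ := by linarith
  have hρ0 : (0:ℝ) < ρ := by linarith
  have h1 : (1:ℝ) < ρ / μ := (one_lt_div hμ0).2 hlt
  have hlog : Real.log (ρ / μ) < ρ / μ - 1 :=
    Real.log_lt_sub_one_of_pos (by positivity) h1.ne'
  have hdiv : ρ / μ ≤ ρ - μ + 1 := by
    rw [div_le_iff₀ hμ0]; nlinarith
  have := Real.log_div hρ0.ne' hμ0.ne'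
  linarith

private lemma g_nonneg {s : ℝ} (hs : s ≠ 0) : 0 ≤ |s| - 1 - Real.log |s| := by
  have := Real.log_le_sub_one_of_pos (abs_pos.2 hs)
  rw [Real.log_abs] at this
  rw [Real.log_abs]; linarith

private lemma g_eq_zero {s : ℝ} (hs : s ≠ 0) (h : |s| - 1 - Real.log |s| = 0) : |s| = 1 := by
  by_contra hne
  have := Real.log_lt_sub_one_of_pos (abs_pos.2 hs) hne
  rw [Real.log_abs] at this
  rw [Real.log_abs] at h
  linarith

private lemma scalar_key {n : ℕ} (lam : Fin n → ℝ) (ρ μ : ℝ) (hμ : 1 ≤ μ) (hμρ : μ ≤ ρ)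
    (i₀ : Fin n) (hi₀ : lam i₀ = ρ) :
    ((∑ i, |lam i|) = μ + ((n:ℝ) - ((Finset.univ.filter fun i => lam i = 0).card : ℝ) - 1)
        + Real.log |∏ i ∈ Finset.univ.filter (fun i => lam i ≠ 0), lam i| - Real.log μ)
      ↔ (μ = ρ ∧ ∀ i, i ≠ i₀ → lam i ≠ 0 → |lam i| = 1) := by
  classical
  set S : Finset (Fin n) := Finset.univ.filter (fun i => lam i ≠ 0) with hS
  have hρ0 : (0:ℝ) < ρ := by linarith
  have hi₀S : i₀ ∈ S := by simp [hS, hi₀, hρ0.ne']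
  -- cardinalities
  have hcard : (n:ℝ) - ((Finset.univ.filter fun i => lam i = 0).card : ℝ) = (S.card : ℝ) := by
    have := Finset.card_filter_add_card_filter_not (s := (Finset.univ : Finset (Fin n)))
      (p := fun i => lam i = 0)
    simp only [Finset.card_univ, Fintype.card_fin] at this
    have h2 : (((Finset.univ.filter fun i => lam i = 0).card : ℝ))
        + (((Finset.univ.filter fun a => ¬ lam a = 0).card : ℝ)) = n := by
      exact_mod_cast congrArg (Nat.cast : ℕ → ℝ) this
    have hSc : (Finset.univ.filter fun a => ¬ lam a = 0) = S := by
      simp [hS, Ne]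
    rw [hSc] at h2
    linarith
  -- sum over all = sum over S
  have hE : (∑ i, |lam i|) = ∑ i ∈ S, |lam i| := by
    rw [eq_comm]
    apply Finset.sum_subset (Finset.filter_subset _ _)
    intro i _ hiS
    have : lam i = 0 := by
      by_contra h
      exact hiS (by simp [hS, h])
    simp [this]
  -- log of product
  have hlogprod : Real.log |∏ i ∈ S, lam i| = ∑ i ∈ S, Real.log |lam i| := by
    rw [Finset.abs_prod]
    exact Real.log_prod (fun i hi => by
      have : lam i ≠ 0 := (Finset.mem_filter.1 hi).2
      exact abs_ne_zero.2 this)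
  -- split off i₀
  have hEsplit : (∑ i ∈ S, |lam i|) = ρ + ∑ i ∈ S.erase i₀, |lam i| := by
    rw [← Finset.add_sum_erase S _ hi₀S, hi₀, abs_of_pos hρ0]
  have hLsplit : (∑ i ∈ S, Real.log |lam i|) = Real.log ρ + ∑ i ∈ S.erase i₀, Real.log |lam i| := by
    rw [← Finset.add_sum_erase S _ hi₀S, hi₀, abs_of_pos hρ0]
  have hcarderase : ((S.erase i₀).card : ℝ) = (S.card : ℝ) - 1 := by
    rw [Finset.card_erase_of_mem hi₀S]
    have : 1 ≤ S.card := Finset.card_pos.2 ⟨i₀, hi₀S⟩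
    push_cast [Nat.cast_sub this]
    ring
  set G : ℝ := ∑ i ∈ S.erase i₀, (|lam i| - 1 - Real.log |lam i|) with hGdef
  have hGsum : G = (∑ i ∈ S.erase i₀, |lam i|) - ((S.erase i₀).card : ℝ)
      - ∑ i ∈ S.erase i₀, Real.log |lam i| := by
    rw [hGdef]
    rw [Finset.sum_sub_distrib, Finset.sum_sub_distrib, Finset.sum_const, nsmul_eq_mul, mul_one]
  set D : ℝ := (ρ - Real.log ρ) - (μ - Real.log μ) with hDdef
  have hne : ∀ i ∈ S.erase i₀, lam i ≠ 0 := fun i hi =>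
    (Finset.mem_filter.1 (Finset.mem_of_mem_erase hi)).2
  have hG0 : 0 ≤ G := Finset.sum_nonneg fun i hi => g_nonneg (hne i hi)
  have hD0 : 0 ≤ D := myD_nonneg hμ hμρ
  -- main equivalence
  have key : ((∑ i, |lam i|) = μ + ((n:ℝ) - ((Finset.univ.filter fun i => lam i = 0).card : ℝ) - 1)
        + Real.log |∏ i ∈ S, lam i| - Real.log μ) ↔ D + G = 0 := by
    rw [hE, hEsplit, hcard, hlogprod, hLsplit, hGsum, hcarderase, hDdef]
    constructor <;> intro h <;> linarith
  rw [key]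
  constructor
  · intro h
    have hDz : D = 0 := le_antisymm (by linarith) hD0
    have hGz : G = 0 := by linarith
    refine ⟨myD_eq_zero hμ hμρ hDz, ?_⟩
    intro i hii₀ hlami
    have hiS : i ∈ S.erase i₀ := Finset.mem_erase.2 ⟨hii₀, by simp [hS, hlami]⟩
    have := (Finset.sum_eq_zero_iff_of_nonneg (fun j hj => g_nonneg (hne j hj))).1 hGz i hiS
    exact g_eq_zero hlami this
  · rintro ⟨hμeq, hone⟩
    have hDz : D = 0 := by rw [hDdef, hμeq]; ring
    have hGz : G = 0 := Finset.sum_eq_zero fun i hi => by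
      have h1 := hone i (Finset.mem_erase.1 hi).1 (hne i hi)
      rw [h1]; simp
    linarith

open scoped Matrix in
theorem energy_eq_rayleigh_bound_iff {n : ℕ}
    (R : Matrix (Fin n) (Fin n) ℝ) (hR : R.IsHermitian)
    (hnonneg : ∀ i j, 0 ≤ R i j)
    (ρ : ℝ) (hρ : IsGreatest (Set.range hR.eigenvalues) ρ)
    (κ : ℕ) (hκ : κ = R.nullityEig hR)
    (x : Fin n → ℝ) (hx0 : x ≠ 0) (hxnn : ∀ i, 0 ≤ x i)
    (μ : ℝ) (hμdef : μ = (x ⬝ᵥ (R *ᵥ x)) / (x ⬝ᵥ x)) (hμ : 1 ≤ μ) :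
    R.energy hR =
      μ + ((n : ℝ) - κ - 1) + Real.log |R.prodNonzeroEig hR| - Real.log μ ↔
    (R *ᵥ x = ρ • x ∧
      ∃ i₀, hR.eigenvalues i₀ = ρ ∧
        ∀ i, i ≠ i₀ → hR.eigenvalues i ≠ 0 → |hR.eigenvalues i| = 1) := by
  classical
  have hle : ∀ i, hR.eigenvalues i ≤ ρ := fun i => hρ.2 ⟨i, rfl⟩
  set U : Matrix (Fin n) (Fin n) ℝ := (hR.eigenvectorUnitary : Matrix (Fin n) (Fin n) ℝ) with hU
  set c : Fin n → ℝ := (star U) *ᵥ x with hc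
  have hU2 : star U * U = 1 := by simp [hU]
  have hU1 : U * star U = 1 := by simp [hU]
  have hspec : R = U * Matrix.diagonal hR.eigenvalues * star U := by
    simpa [hU, Function.comp] using hR.spectral_theorem
  have hxc : x = U *ᵥ c := by
    rw [hc, Matrix.mulVec_mulVec, hU1, Matrix.one_mulVec]
  have hstarT : star U = Uᵀ := Matrix.conjTranspose_eq_transpose_of_trivial U
  have hdotU : ∀ z : Fin n → ℝ, x ⬝ᵥ (U *ᵥ z) = c ⬝ᵥ z := by
    intro z
    rw [Matrix.dotProduct_mulVec, hc, hstarT, Matrix.mulVec_transpose]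
  have hRx : R *ᵥ x = U *ᵥ (Matrix.diagonal hR.eigenvalues *ᵥ c) := by
    conv_lhs => rw [hspec]
    rw [← Matrix.mulVec_mulVec, ← Matrix.mulVec_mulVec, ← hc]
  have hxRx : x ⬝ᵥ (R *ᵥ x) = ∑ i, hR.eigenvalues i * c i ^ 2 := by
    rw [hRx, hdotU]
    simp only [dotProduct, Matrix.mulVec_diagonal]
    exact Finset.sum_congr rfl fun i _ => by ring
  have hxx : x ⬝ᵥ x = ∑ i, c i ^ 2 := by
    have h0 : x ⬝ᵥ x = c ⬝ᵥ c := by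
      nth_rewrite 2 [hxc]
      exact hdotU c
    rw [h0]
    simp only [dotProduct]
    exact Finset.sum_congr rfl fun i _ => by ring
  have hxxpos : 0 < x ⬝ᵥ x := by
    rcases lt_or_eq_of_le (Finset.sum_nonneg fun i _ => mul_self_nonneg (x i) :
        0 ≤ x ⬝ᵥ x) with h | h
    · exact h
    · exact absurd (dotProduct_self_eq_zero.mp h.symm) hx0
  have hμxx : μ * (x ⬝ᵥ x) = x ⬝ᵥ (R *ᵥ x) := by
    rw [hμdef, div_mul_cancel₀ _ hxxpos.ne']
  have hUinj : Function.Injective (U.mulVec) := by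
    intro a b hab
    have : star U *ᵥ (U *ᵥ a) = star U *ᵥ (U *ᵥ b) := by rw [hab]
    simpa [Matrix.mulVec_mulVec, hU2, Matrix.one_mulVec] using this
  have heig : (R *ᵥ x = ρ • x) ↔ ∀ i, hR.eigenvalues i * c i = ρ * c i := by
    constructor
    · intro h
      have h2 : U *ᵥ (Matrix.diagonal hR.eigenvalues *ᵥ c) = U *ᵥ (ρ • c) := by
        rw [← hRx, h, hxc, Matrix.mulVec_smul]
      have h3 := hUinj h2
      intro i
      have := congrFun h3 i
      simpa [Matrix.mulVec_diagonal] using this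
    · intro h
      rw [hRx, hxc, ← Matrix.mulVec_smul]
      exact congrArg U.mulVec (funext fun i => by
        simpa [Matrix.mulVec_diagonal] using h i)
  have hμρ : μ ≤ ρ := by
    rw [hμdef, div_le_iff₀ hxxpos]
    rw [hxRx, hxx, Finset.mul_sum]
    exact Finset.sum_le_sum fun i _ =>
      mul_le_mul_of_nonneg_right (hle i) (sq_nonneg _)
  have hμeig : μ = ρ ↔ R *ᵥ x = ρ • x := by
    constructor
    · intro h
      rw [heig]
      have hsum : ∑ i, (ρ - hR.eigenvalues i) * c i ^ 2 = 0 := by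
        have h5 : ρ * (x ⬝ᵥ x) = x ⬝ᵥ (R *ᵥ x) := by rw [← h, hμxx]
        rw [hxRx, hxx, Finset.mul_sum] at h5
        calc ∑ i, (ρ - hR.eigenvalues i) * c i ^ 2
            = (∑ i, ρ * c i ^ 2) - ∑ i, hR.eigenvalues i * c i ^ 2 := by
              rw [← Finset.sum_sub_distrib]
              exact Finset.sum_congr rfl fun i _ => by ring
          _ = 0 := by rw [h5]; ring
      have hall := (Finset.sum_eq_zero_iff_of_nonneg fun i _ =>
        mul_nonneg (sub_nonneg.2 (hle i)) (sq_nonneg (c i))).1 hsum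
      intro i
      rcases mul_eq_zero.mp (hall i (Finset.mem_univ i)) with h1 | h2
      · have : hR.eigenvalues i = ρ := by linarith [sub_eq_zero.mp h1]
        rw [this]
      · have : c i = 0 := sq_eq_zero_iff.mp h2
        rw [this, mul_zero, mul_zero]
    · intro h
      rw [hμdef]
      have : x ⬝ᵥ (R *ᵥ x) = ρ * (x ⬝ᵥ x) := by
        rw [h, dotProduct_smul]; simp [smul_eq_mul]
      rw [this, mul_div_assoc, div_self hxxpos.ne', mul_one]
  have hkey : ∀ i₀ : Fin n, hR.eigenvalues i₀ = ρ →
      (R.energy hR = μ + ((n : ℝ) - κ - 1)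
          + Real.log |R.prodNonzeroEig hR| - Real.log μ ↔
        (μ = ρ ∧ ∀ i, i ≠ i₀ → hR.eigenvalues i ≠ 0 → |hR.eigenvalues i| = 1)) := by
    intro i₀ hi₀
    have := scalar_key hR.eigenvalues ρ μ hμ hμρ i₀ hi₀
    simpa [Matrix.energy, Matrix.nullityEig, Matrix.prodNonzeroEig, hκ] using this
  constructor
  · intro h
    obtain ⟨i₀, hi₀⟩ := hρ.1
    obtain ⟨h1, h2⟩ := (hkey i₀ hi₀).1 h
    exact ⟨hμeig.1 h1, i₀, hi₀, h2⟩
  · rintro ⟨hRxρ, i₀, hi₀, h2⟩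
    exact (hkey i₀ hi₀).2 ⟨hμeig.2 hRxρ, h2⟩
end

section
/- Let G be a finite simple graph with n vertices and nullity κ = η(G), and let G₁ be the subgraph induced on a connected component of G having n₁ ≥ 2 vertices and m₁ edges. Then E(G) ≥ 2m₁/n₁ + (n − κ − 1) + ln|Υ_{n−κ}(G)| − ln(2m₁/n₁). -/
open Finset

/-- Adjacency in an induced subgraph is decidable. -/
instance instDecidableRelInduceAdj {n : ℕ} (G : SimpleGraph (Fin n))
    [h : DecidableRel G.Adj] (s : Set (Fin n)) :
    DecidableRel (SimpleGraph.induce s G).Adj :=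
  fun a b => h a b

open Matrix

/-- Rayleigh quotient bound -/
lemma rayleigh_le' {n : ℕ} (A : Matrix (Fin n) (Fin n) ℝ) (hA : A.IsHermitian)
    (c : ℝ) (hc : ∀ i, hA.eigenvalues i ≤ c) (x : Fin n → ℝ) :
    x ⬝ᵥ (A *ᵥ x) ≤ c * (x ⬝ᵥ x) := by
  set U : Matrix (Fin n) (Fin n) ℝ := (hA.eigenvectorUnitary : Matrix (Fin n) (Fin n) ℝ) with hUdef
  have hU : U * star U = 1 := (Matrix.mem_unitaryGroup_iff).mp hA.eigenvectorUnitary.2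
  set D := Matrix.diagonal (fun i => c - hA.eigenvalues i) with hDdef
  have hPSD : (U * D * star U).PosSemidef := by
    simpa [Matrix.star_eq_conjTranspose] using
      (Matrix.PosSemidef.diagonal (fun i => sub_nonneg.2 (hc i))).mul_mul_conjTranspose_same U
  have key : U * D * star U = c • (1 : Matrix (Fin n) (Fin n) ℝ) - A := by
    have hD2 : D = c • (1 : Matrix (Fin n) (Fin n) ℝ)
        - Matrix.diagonal (RCLike.ofReal ∘ hA.eigenvalues) := by
      ext i j
      by_cases h : i = j <;>
        simp [hDdef, Matrix.diagonal, Matrix.one_apply, h]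
    have hs := hA.spectral_theorem
    rw [Unitary.conjStarAlgAut_apply, ← hUdef] at hs
    rw [hD2, Matrix.mul_sub, Matrix.sub_mul, ← hs]
    congr 1
    rw [Matrix.mul_smul, Matrix.smul_mul, Matrix.mul_one, hU]
  have h0 := hPSD.dotProduct_mulVec_nonneg x
  rw [key] at h0
  simp only [star_trivial, Matrix.sub_mulVec, Matrix.smul_mulVec, Matrix.one_mulVec,
    dotProduct_sub, dotProduct_smul, smul_eq_mul] at h0
  linarith

lemma degree_sum_eq' {n : ℕ} (G : SimpleGraph (Fin n)) [DecidableRel G.Adj]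
    (s : Finset (Fin n))
    (hnbr : ∀ v ∈ s, ∀ u, G.Adj v u → u ∈ s) :
    ∑ v ∈ s, G.degree v
      = 2 * (SimpleGraph.induce (↑s : Set (Fin n)) G).edgeFinset.card := by
  classical
  rw [← SimpleGraph.sum_degrees_eq_twice_card_edges]
  rw [← Finset.sum_coe_sort s (fun v => G.degree v)]
  symm
  apply Fintype.sum_equiv (Equiv.subtypeEquivRight (fun x => (Finset.mem_coe)))
  rintro ⟨v, hv⟩
  have hv' : v ∈ s := hv
  unfold SimpleGraph.degree
  apply Finset.card_bij (fun (u : ↥(↑s : Set (Fin n))) _ => (u : Fin n))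
  · rintro ⟨u, hu⟩ h
    rw [SimpleGraph.mem_neighborFinset] at h ⊢
    exact h
  · rintro ⟨a, _⟩ _ ⟨b, _⟩ _ h
    exact Subtype.ext h
  · intro w hw
    rw [SimpleGraph.mem_neighborFinset] at hw
    refine ⟨⟨w, hnbr v hv' w hw⟩, ?_, rfl⟩
    rw [SimpleGraph.mem_neighborFinset]
    exact hw

theorem graph_energy_lower_bound_component_average_degree {n : ℕ}
    (G : SimpleGraph (Fin n)) [DecidableRel G.Adj]
    (κ : ℕ) (hκ : κ = G.nullity)
    (s : Finset (Fin n))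
    (hcomp : ∃ c : G.ConnectedComponent, (↑s : Set (Fin n)) = c.supp)
    (n₁ m₁ : ℕ) (hn₁ : n₁ = s.card) (hn₁2 : 2 ≤ n₁)
    (hm₁ : m₁ = (SimpleGraph.induce (↑s : Set (Fin n)) G).edgeFinset.card) :
    G.energy ≥
      2 * (m₁ : ℝ) / (n₁ : ℝ) + ((n : ℝ) - κ - 1) +
        Real.log |G.prodNonzeroEig| - Real.log (2 * (m₁ : ℝ) / (n₁ : ℝ)) := by
  obtain ⟨c, hc⟩ := hcomp
  have hA := G.adjMatrix_isHermitian
  set μ : Fin n → ℝ := (G.adjMatrix_isHermitian).eigenvalues with hμdef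
  -- neighbors stay in the component
  have hnbr : ∀ v ∈ s, ∀ u, G.Adj v u → u ∈ s := by
    intro v hv u hadj
    have hv' : v ∈ c.supp := by rw [← hc]; exact hv
    rw [SimpleGraph.ConnectedComponent.mem_supp_iff] at hv'
    have hu : u ∈ c.supp := by
      rw [SimpleGraph.ConnectedComponent.mem_supp_iff, ← hv']
      exact SimpleGraph.ConnectedComponent.sound hadj.symm.reachable
    rw [← hc] at hu
    exact hu
  -- each vertex of s has degree at least one
  have hdeg1 : ∀ v ∈ s, 1 ≤ G.degree v := by
    intro v hv
    obtain ⟨u, hu, hne⟩ := Finset.exists_mem_ne (by omega : 1 < s.card) v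
    have hreach : G.Reachable v u := by
      have h1 : G.connectedComponentMk v = c := by
        rw [← SimpleGraph.ConnectedComponent.mem_supp_iff, ← hc]; exact hv
      have h2 : G.connectedComponentMk u = c := by
        rw [← SimpleGraph.ConnectedComponent.mem_supp_iff, ← hc]; exact hu
      exact (SimpleGraph.ConnectedComponent.eq).mp (h1.trans h2.symm)
    obtain ⟨p⟩ := hreach
    have : 0 < G.degree v := by
      rw [G.degree_pos_iff_exists_adj]
      cases p with
      | nil => exact absurd rfl hne
      | cons h _ => exact ⟨_, h⟩
    omega
  -- degree sum identity
  have hds : ∑ v ∈ s, G.degree v = 2 * m₁ := by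
    rw [hm₁]; exact degree_sum_eq' G s hnbr
  -- the test vector
  set x : Fin n → ℝ := fun v => if v ∈ s then (1 : ℝ) else 0 with hxdef
  have hmv : ∀ v ∈ s, (G.adjMatrix ℝ *ᵥ x) v = (G.degree v : ℝ) := by
    intro v hv
    rw [SimpleGraph.adjMatrix_mulVec_apply]
    rw [Finset.sum_congr rfl (fun u hu => if_pos
      (hnbr v hv u ((SimpleGraph.mem_neighborFinset G v u).mp hu)))]
    rw [Finset.sum_const, nsmul_eq_mul, mul_one]
    rfl
  have hquad : x ⬝ᵥ (G.adjMatrix ℝ *ᵥ x) = ∑ v ∈ s, (G.degree v : ℝ) := by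
    unfold dotProduct
    rw [← Finset.sum_filter_add_sum_filter_not Finset.univ (fun v => v ∈ s)]
    have h2 : ∑ v ∈ Finset.univ.filter (fun v => v ∉ s), x v * (G.adjMatrix ℝ *ᵥ x) v = 0 := by
      apply Finset.sum_eq_zero
      intro v hv
      rw [Finset.mem_filter] at hv
      simp [hxdef, hv.2]
    rw [h2, add_zero, Finset.filter_univ_mem]
    apply Finset.sum_congr rfl
    intro v hv
    rw [hmv v hv]
    simp only [hxdef]
    rw [if_pos hv, one_mul]
  have hxx : x ⬝ᵥ x = (n₁ : ℝ) := by
    unfold dotProduct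
    simp only [hxdef, ite_mul, one_mul, zero_mul, mul_ite, mul_one, mul_zero]
    have hone : ∀ i ∈ s, (if i ∈ s then (1:ℝ) else 0) = 1 := fun i hi => if_pos hi
    rw [Finset.sum_ite_mem, Finset.univ_inter, Finset.sum_congr rfl hone,
      Finset.sum_const, nsmul_eq_mul, mul_one, hn₁]
  -- maximal eigenvalue
  have hn0 : 0 < n := by
    have h := Finset.card_le_univ s
    rw [Fintype.card_fin] at h
    omega
  obtain ⟨i₀, -, hmax⟩ := Finset.exists_max_image Finset.univ μ ⟨⟨0, hn0⟩, Finset.mem_univ _⟩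
  have hray := rayleigh_le' (G.adjMatrix ℝ) G.adjMatrix_isHermitian (μ i₀)
    (fun i => hmax i (Finset.mem_univ i)) x
  rw [hquad, hxx] at hray
  have hsum_cast : ∑ v ∈ s, (G.degree v : ℝ) = 2 * (m₁ : ℝ) := by
    rw [← Nat.cast_sum]
    exact_mod_cast congrArg (Nat.cast : ℕ → ℝ) hds
  rw [hsum_cast] at hray
  have hcard_le : n₁ ≤ 2 * m₁ := by
    calc n₁ = ∑ _v ∈ s, 1 := by simp [hn₁]
    _ ≤ ∑ v ∈ s, G.degree v := Finset.sum_le_sum hdeg1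
    _ = 2 * m₁ := hds
  have hn₁pos : (0 : ℝ) < (n₁ : ℝ) := by exact_mod_cast (by omega : 0 < n₁)
  set d : ℝ := 2 * (m₁ : ℝ) / (n₁ : ℝ) with hddef
  have hd1 : 1 ≤ d := by
    rw [hddef, le_div_iff₀ hn₁pos, one_mul]
    exact_mod_cast hcard_le
  have hdpos : 0 < d := lt_of_lt_of_le zero_lt_one hd1
  have hμd : d ≤ μ i₀ := by
    rw [hddef, div_le_iff₀ hn₁pos]
    linarith
  have hμpos : 0 < μ i₀ := lt_of_lt_of_le zero_lt_one (hd1.trans hμd)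
  -- the nonzero eigenvalues
  set T : Finset (Fin n) := Finset.univ.filter (fun i => μ i ≠ 0) with hTdef
  have hi₀T : i₀ ∈ T := by
    rw [hTdef, Finset.mem_filter]
    exact ⟨Finset.mem_univ _, ne_of_gt hμpos⟩
  have hκn : κ + T.card = n := by
    have h := Finset.card_filter_add_card_filter_not
      (s := (Finset.univ : Finset (Fin n))) (p := fun i => μ i = 0)
    rw [Finset.card_univ, Fintype.card_fin] at h
    rw [hκ]
    unfold SimpleGraph.nullity
    rw [← hμdef]
    convert h using 3
  have hTcard1 : 1 ≤ T.card := Finset.card_pos.mpr ⟨i₀, hi₀T⟩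
  have hcard_erase : ((T.erase i₀).card : ℝ) = (n : ℝ) - κ - 1 := by
    rw [Finset.card_erase_of_mem hi₀T]
    have : T.card = n - κ := by omega
    rw [this]
    have hκle : κ + 1 ≤ n := by omega
    push_cast [Nat.cast_sub (by omega : 1 ≤ n - κ), Nat.cast_sub (by omega : κ ≤ n)]
    ring
  -- product of nonzero eigenvalues
  have hΥne : G.prodNonzeroEig ≠ 0 := by
    unfold SimpleGraph.prodNonzeroEig
    rw [← hμdef, ← hTdef]
    rw [Finset.prod_ne_zero_iff]
    intro i hi
    rw [hTdef] at hi
    exact (Finset.mem_filter.mp hi).2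
  have hΥ : ∏ i ∈ T, |μ i| = |G.prodNonzeroEig| := by
    unfold SimpleGraph.prodNonzeroEig
    rw [← hμdef, ← hTdef, Finset.abs_prod]
  have e6 : ∏ i ∈ T.erase i₀, |μ i| = |G.prodNonzeroEig| / μ i₀ := by
    rw [← hΥ, ← Finset.mul_prod_erase T _ hi₀T, abs_of_pos hμpos]
    field_simp
  -- per-eigenvalue bound
  have e3 : ∀ i ∈ T.erase i₀, 1 + Real.log |μ i| ≤ |μ i| := by
    intro i hi
    have hiT := Finset.mem_of_mem_erase hi
    rw [hTdef, Finset.mem_filter] at hiT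
    have h := Real.log_le_sub_one_of_pos (abs_pos.mpr hiT.2)
    linarith
  have e5 : ∑ i ∈ T.erase i₀, (1 + Real.log |μ i|)
      = ((T.erase i₀).card : ℝ) + Real.log (∏ i ∈ T.erase i₀, |μ i|) := by
    rw [Finset.sum_add_distrib, Finset.sum_const, Real.log_prod]
    · rw [nsmul_eq_mul, mul_one]
    · intro i hi
      have hiT := Finset.mem_of_mem_erase hi
      rw [hTdef, Finset.mem_filter] at hiT
      exact abs_ne_zero.mpr hiT.2
  have e7 : Real.log (|G.prodNonzeroEig| / μ i₀)
      = Real.log |G.prodNonzeroEig| - Real.log (μ i₀) :=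
    Real.log_div (abs_ne_zero.mpr hΥne) (ne_of_gt hμpos)
  -- energy lower bound
  have eE : G.energy ≥ μ i₀ + ((T.erase i₀).card : ℝ)
      + Real.log |G.prodNonzeroEig| - Real.log (μ i₀) := by
    unfold SimpleGraph.energy
    rw [← hμdef]
    have e1 : ∑ i ∈ T, |μ i| ≤ ∑ i, |μ i| :=
      Finset.sum_le_sum_of_subset_of_nonneg (Finset.subset_univ T)
        (fun i _ _ => abs_nonneg _)
    have e2 : |μ i₀| + ∑ i ∈ T.erase i₀, |μ i| = ∑ i ∈ T, |μ i| :=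
      Finset.add_sum_erase T (fun i => |μ i|) hi₀T
    have e4 : ∑ i ∈ T.erase i₀, (1 + Real.log |μ i|) ≤ ∑ i ∈ T.erase i₀, |μ i| :=
      Finset.sum_le_sum e3
    rw [e5, e6, e7] at e4
    rw [abs_of_pos hμpos] at e2
    linarith
  -- monotonicity of t - log t
  have hmono : d - Real.log d ≤ μ i₀ - Real.log (μ i₀) := by
    have hlog : Real.log (μ i₀) - Real.log d ≤ μ i₀ - d := by
      rw [← Real.log_div (ne_of_gt hμpos) (ne_of_gt hdpos)]
      have h1 := Real.log_le_sub_one_of_pos (div_pos hμpos hdpos)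
      have h2 : μ i₀ / d - 1 ≤ μ i₀ - d := by
        rw [div_sub_one (ne_of_gt hdpos), div_le_iff₀ hdpos]
        nlinarith
      linarith
    linarith
  rw [hcard_erase] at eE
  linarith
end

section
/- Let G be a finite simple graph with n vertices and nullity κ = η(G), and suppose some connected component of G, with at least 2 vertices, induces a subgraph G₁ that is r₁-regular (so r₁ ≥ 1). Then E(G) ≥ r₁ + (n − κ − 1) + ln|Υ_{n−κ}(G)| − ln r₁. -/
open Finset

open scoped Matrix

lemma sub_log_mono {a b : ℝ} (ha : 1 ≤ a) (hab : a ≤ b) :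
    a - Real.log a ≤ b - Real.log b := by
  have ha0 : 0 < a := by linarith
  have hb0 : 0 < b := by linarith
  have h1 : Real.log b - Real.log a = Real.log (b / a) := (Real.log_div hb0.ne' ha0.ne').symm
  have h2 : Real.log (b / a) ≤ b / a - 1 := Real.log_le_sub_one_of_pos (by positivity)
  have h3 : b / a - 1 ≤ b - a := by
    rw [div_sub_one ha0.ne', div_le_iff₀ ha0]
    nlinarith
  linarith

lemma rayleigh_exists {N : ℕ} (A : Matrix (Fin N) (Fin N) ℝ) (hA : A.IsHermitian)
    (x : Fin N → ℝ) (r : ℝ) (hx : 0 < x ⬝ᵥ x) (h : r * (x ⬝ᵥ x) ≤ x ⬝ᵥ (A *ᵥ x)) :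
    ∃ i, r ≤ hA.eigenvalues i := by
  by_contra hcon
  push_neg at hcon
  set B : Matrix (Fin N) (Fin N) ℝ := (hA.eigenvectorUnitary : Matrix (Fin N) (Fin N) ℝ) with hB
  have hBstar : star B = Bᵀ := B.conjTranspose_eq_transpose_of_trivial
  have hdp : ∀ (M : Matrix (Fin N) (Fin N) ℝ) (u v : Fin N → ℝ),
      u ⬝ᵥ (M *ᵥ v) = (Mᵀ *ᵥ u) ⬝ᵥ v := by
    intro M u v
    rw [Matrix.dotProduct_mulVec, Matrix.mulVec_transpose]
  set y : Fin N → ℝ := Bᵀ *ᵥ x with hy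
  have key1 : x ⬝ᵥ (A *ᵥ x) = ∑ k, hA.eigenvalues k * (y k * y k) := by
    conv_lhs => rw [hA.spectral_theorem, Unitary.conjStarAlgAut_apply]
    rw [← Matrix.mulVec_mulVec, ← Matrix.mulVec_mulVec, hdp, hBstar]
    simp [dotProduct, Matrix.mulVec_diagonal]
    ring_nf
    congr 1
    ext k
    ring
  have key2 : x ⬝ᵥ x = ∑ k, y k * y k := by
    have h1 : B * star B = 1 := Matrix.mem_unitaryGroup_iff.mp hA.eigenvectorUnitary.2
    calc x ⬝ᵥ x = x ⬝ᵥ ((B * star B) *ᵥ x) := by rw [h1, Matrix.one_mulVec]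
      _ = x ⬝ᵥ (B *ᵥ (star B *ᵥ x)) := by rw [Matrix.mulVec_mulVec]
      _ = (Bᵀ *ᵥ x) ⬝ᵥ (star B *ᵥ x) := hdp _ _ _
      _ = ∑ k, y k * y k := by rw [hBstar, ← hy, dotProduct]
  -- some y k is nonzero
  have hypos : 0 < ∑ k, y k * y k := key2 ▸ hx
  have hk0 : ∃ k0 : Fin N, y k0 ≠ 0 := by
    by_contra hall
    push_neg at hall
    simp [hall] at hypos
  obtain ⟨k0, hk0⟩ := hk0
  have hlt : ∑ k, hA.eigenvalues k * (y k * y k) < ∑ k, r * (y k * y k) := by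
    apply Finset.sum_lt_sum
    · intro k _
      exact mul_le_mul_of_nonneg_right (hcon k).le (mul_self_nonneg _)
    · exact ⟨k0, Finset.mem_univ _, by
        have : 0 < y k0 * y k0 := mul_self_pos.mpr hk0
        exact mul_lt_mul_of_pos_right (hcon k0) this⟩
  rw [← Finset.mul_sum, ← key2, ← key1] at hlt
  linarith

theorem graph_energy_lower_bound_regular_component {n : ℕ}
    (G : SimpleGraph (Fin n)) [DecidableRel G.Adj]
    (κ : ℕ) (hκ : κ = G.nullity)
    (s : Finset (Fin n))
    (hcomp : ∃ c : G.ConnectedComponent, (↑s : Set (Fin n)) = c.supp)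
    (hcard : 2 ≤ s.card)
    (r₁ : ℕ) (hr₁ : 1 ≤ r₁)
    (hreg : (SimpleGraph.induce (↑s : Set (Fin n)) G).IsRegularOfDegree r₁) :
    G.energy ≥
      (r₁ : ℝ) + ((n : ℝ) - κ - 1) +
        Real.log |G.prodNonzeroEig| - Real.log (r₁ : ℝ) := by
  classical
  obtain ⟨c, hc⟩ := hcomp
  have hA := G.adjMatrix_isHermitian
  set eig : Fin n → ℝ := hA.eigenvalues with heig
  -- all neighbors of vertices of s lie in s
  have hns : ∀ i ∈ s, ∀ j, G.Adj i j → j ∈ s := by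
    intro i hi j hij
    have hi' : i ∈ c.supp := hc ▸ hi
    have : G.connectedComponentMk j = c := by
      rw [SimpleGraph.ConnectedComponent.mem_supp_iff] at hi'
      rw [← hi']
      exact SimpleGraph.ConnectedComponent.connectedComponentMk_eq_of_adj hij.symm
    have : j ∈ c.supp := (SimpleGraph.ConnectedComponent.mem_supp_iff c j).mpr this
    rwa [← hc] at this
  -- degrees within s
  have hdeg : ∀ i ∈ s, (s.filter (G.Adj i)).card = r₁ := by
    intro i hi
    have := hreg ⟨i, hi⟩
    rw [SimpleGraph.degree, SimpleGraph.neighborFinset_eq_filter] at this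
    rw [← this]
    apply Finset.card_bij (fun (j : Fin n) (hj : j ∈ s.filter (G.Adj i)) =>
      (⟨j, (Finset.mem_filter.mp hj).1⟩ : (↑s : Set (Fin n))))
    · intro j hj
      simp only [Finset.mem_filter, Finset.mem_univ, true_and]
      exact (Finset.mem_filter.mp hj).2
    · intro a ha b hb hab
      simpa using congrArg Subtype.val hab
    · intro b hb
      simp only [Finset.mem_filter, Finset.mem_univ, true_and] at hb
      exact ⟨(b : Fin n), Finset.mem_filter.mpr ⟨b.2, hb⟩, rfl⟩
  -- the indicator vector of s
  set x : Fin n → ℝ := fun j => if j ∈ s then 1 else 0 with hxdef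
  have hxx : x ⬝ᵥ x = (s.card : ℝ) := by
    have h1 : ∀ j, x j * x j = if j ∈ s then (1 : ℝ) else 0 := by
      intro j; by_cases h : j ∈ s <;> simp [hxdef, h]
    rw [dotProduct]
    simp_rw [h1]
    rw [Finset.sum_ite_mem, Finset.univ_inter, Finset.sum_const, nsmul_eq_mul, mul_one]
  have hinner : ∀ i ∈ s, ∑ j, (G.adjMatrix ℝ) i j * x j = (r₁ : ℝ) := by
    intro i hi
    have h1 : ∀ j, (G.adjMatrix ℝ) i j * x j = if j ∈ s.filter (G.Adj i) then (1 : ℝ) else 0 := by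
      intro j
      by_cases hj : j ∈ s <;> by_cases ha : G.Adj i j <;>
        simp [hxdef, hj, ha]
    simp_rw [h1]
    rw [Finset.sum_ite_mem, Finset.univ_inter, Finset.sum_const, nsmul_eq_mul, mul_one,
      hdeg i hi]
  have hAx : x ⬝ᵥ ((G.adjMatrix ℝ) *ᵥ x) = (r₁ : ℝ) * (s.card : ℝ) := by
    rw [dotProduct]
    have h1 : ∀ i, x i * ((G.adjMatrix ℝ) *ᵥ x) i = if i ∈ s then ((G.adjMatrix ℝ) *ᵥ x) i else 0 := by
      intro i; by_cases h : i ∈ s <;> simp [hxdef, h]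
    simp_rw [h1]
    rw [Finset.sum_ite_mem, Finset.univ_inter]
    have h2 : ∀ i ∈ s, ((G.adjMatrix ℝ) *ᵥ x) i = (r₁ : ℝ) := by
      intro i hi
      simp only [Matrix.mulVec, dotProduct]
      exact hinner i hi
    rw [Finset.sum_congr rfl h2, Finset.sum_const, nsmul_eq_mul, mul_comm]
  have hspos : 0 < (s.card : ℝ) := by
    have : 0 < s.card := by omega
    exact_mod_cast this
  have hxpos : 0 < x ⬝ᵥ x := by rw [hxx]; exact hspos
  have hray : ∃ i, (r₁ : ℝ) ≤ eig i := by
    apply rayleigh_exists (G.adjMatrix ℝ) hA x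
    · exact hxpos
    · rw [hxx, hAx]
  obtain ⟨i0, hi0⟩ := hray
  have hr1R : (1 : ℝ) ≤ (r₁ : ℝ) := by exact_mod_cast hr₁
  have hi0pos : 0 < eig i0 := by linarith
  set T : Finset (Fin n) := Finset.univ.filter (fun i => eig i ≠ 0) with hT
  have hi0T : i0 ∈ T := by
    simp only [hT, Finset.mem_filter, Finset.mem_univ, true_and]
    exact hi0pos.ne'
  have hTcard : T.card = n - κ := by
    have h1 := Finset.card_filter_add_card_filter_not
      (s := (Finset.univ : Finset (Fin n))) (p := fun i => eig i = 0)
    rw [Finset.card_univ, Fintype.card_fin] at h1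
    have h2 : κ = (Finset.univ.filter (fun i => eig i = 0)).card := hκ
    have h3 : T.card = (Finset.univ.filter (fun i => ¬ eig i = 0)).card := rfl
    omega
  have hκle : κ ≤ n := by
    have h2 : κ = (Finset.univ.filter (fun i => eig i = 0)).card := hκ
    have := Finset.card_filter_le (Finset.univ : Finset (Fin n)) (fun i => eig i = 0)
    rw [Finset.card_univ, Fintype.card_fin] at this
    omega
  have hTne : 1 ≤ T.card := Finset.card_pos.mpr ⟨i0, hi0T⟩ 
  -- prodNonzeroEig
  have hprod : |G.prodNonzeroEig| = ∏ i ∈ T, |eig i| := by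
    rw [SimpleGraph.prodNonzeroEig, Finset.abs_prod]
  have hPsplit : ∏ i ∈ T, |eig i| = eig i0 * ∏ i ∈ T.erase i0, |eig i| := by
    rw [← Finset.mul_prod_erase T _ hi0T, abs_of_pos hi0pos]
  have hPpos : 0 < ∏ i ∈ T.erase i0, |eig i| := by
    apply Finset.prod_pos
    intro i hi
    have : eig i ≠ 0 := by
      have := Finset.mem_of_mem_erase hi
      simpa [hT] using this
    exact abs_pos.mpr this
  have hlogprod : Real.log |G.prodNonzeroEig| =
      Real.log (eig i0) + ∑ i ∈ T.erase i0, Real.log |eig i| := by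
    rw [hprod, hPsplit, Real.log_mul hi0pos.ne' hPpos.ne', Real.log_prod]
    intro i hi
    exact (abs_pos.mpr (by simpa [hT] using Finset.mem_of_mem_erase hi)).ne'
  -- energy bound
  have hstep1 : ∑ i ∈ T, |eig i| ≤ G.energy := by
    rw [SimpleGraph.energy]
    apply Finset.sum_le_sum_of_subset_of_nonneg (Finset.subset_univ T)
    intro i _ _
    exact abs_nonneg _
  have hstep2 : ∑ i ∈ T, |eig i| = |eig i0| + ∑ i ∈ T.erase i0, |eig i| :=
    (Finset.add_sum_erase T _ hi0T).symm
  have hstep3 : ∀ i ∈ T.erase i0, 1 + Real.log |eig i| ≤ |eig i| := by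
    intro i hi
    have hpos : 0 < |eig i| :=
      abs_pos.mpr (by simpa [hT] using Finset.mem_of_mem_erase hi)
    have := Real.log_le_sub_one_of_pos hpos
    linarith
  have hstep4 : (T.card : ℝ) - 1 + ∑ i ∈ T.erase i0, Real.log |eig i|
      ≤ ∑ i ∈ T.erase i0, |eig i| := by
    have h1 : ∑ i ∈ T.erase i0, (1 + Real.log |eig i|) ≤ ∑ i ∈ T.erase i0, |eig i| :=
      Finset.sum_le_sum hstep3
    rw [Finset.sum_add_distrib, Finset.sum_const, nsmul_eq_mul, mul_one,
      Finset.card_erase_of_mem hi0T] at h1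
    have h2 : ((T.card - 1 : ℕ) : ℝ) = (T.card : ℝ) - 1 := by
      have := hTne; push_cast [Nat.cast_sub hTne]; ring
    linarith [h2 ▸ h1]
  have hTcardR : (T.card : ℝ) = (n : ℝ) - (κ : ℝ) := by
    rw [hTcard, Nat.cast_sub hκle]
  have hmono : (r₁ : ℝ) - Real.log (r₁ : ℝ) ≤ eig i0 - Real.log (eig i0) :=
    sub_log_mono hr1R hi0
  have habs0 : |eig i0| = eig i0 := abs_of_pos hi0pos
  calc (r₁ : ℝ) + ((n : ℝ) - κ - 1) + Real.log |G.prodNonzeroEig| - Real.log (r₁ : ℝ)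
      = ((r₁ : ℝ) - Real.log (r₁ : ℝ)) + ((n : ℝ) - κ - 1) + Real.log |G.prodNonzeroEig| := by
        ring
    _ ≤ (eig i0 - Real.log (eig i0)) + ((T.card : ℝ) - 1) + Real.log |G.prodNonzeroEig| := by
        rw [hTcardR]; linarith
    _ = eig i0 + (((T.card : ℝ) - 1) + ∑ i ∈ T.erase i0, Real.log |eig i|) := by
        rw [hlogprod]; ring
    _ ≤ eig i0 + ∑ i ∈ T.erase i0, |eig i| := by linarith
    _ = |eig i0| + ∑ i ∈ T.erase i0, |eig i| := by rw [habs0]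
    _ = ∑ i ∈ T, |eig i| := hstep2.symm
    _ ≤ G.energy := hstep1
end
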